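/- arXiv:1511.00213 — 4 statements merged into one kernel-verified Lean document; each statement's English description precedes it below -/
import Mathlib

section
/- Let s_1 <= s_2 <= ... <= s_k be reals and y_1,...,y_k in [0,1]. The isotonic regression fit f* minimizing sum_i (f(s_i) - y_i)^2 over nondecreasing functions f satisfies: for every i, the fitted value f*(s_i) equals the slope of the greatest convex minorant of the cumulative sum diagram P_j = (sum_{l<=j} w_l, sum_{l<=j} y'_l w_l) over the interval corresponding to s_i, where s'_1 < ... < s'_{k'} are the distinct scores, w_j their multiplicities, and y'_j the average label at s'_j. -/
/-- The greatest convex minorant of a set of points `P ⊆ ℝ × ℝ`, evaluated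
at `t`: the supremum over all convex functions lying below the points. -/
noncomputable def gcm (P : Set (ℝ × ℝ)) (t : ℝ) : ℝ :=
  sSup {v : ℝ | ∃ c : ℝ → ℝ, ConvexOn ℝ Set.univ c ∧
    (∀ q ∈ P, c q.1 ≤ q.2) ∧ v = c t}

/-- Cumulative weight before index `n`. -/
noncomputable def cumW {k' : ℕ} (w : Fin k' → ℕ) (n : ℕ) : ℝ :=
  ∑ l ∈ Finset.univ.filter (fun l : Fin k' => (l : ℕ) < n), (w l : ℝ)

/-- Cumulative weighted label before index `n`. -/
noncomputable def cumY {k' : ℕ} (w : Fin k' → ℕ) (y' : Fin k' → ℝ) (n : ℕ) : ℝ :=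
  ∑ l ∈ Finset.univ.filter (fun l : Fin k' => (l : ℕ) < n), y' l * (w l : ℝ)

/-- The cumulative sum diagram (CSD) of the data. -/
noncomputable def csd {k' : ℕ} (w : Fin k' → ℕ) (y' : Fin k' → ℝ) : Set (ℝ × ℝ) :=
  {p | ∃ n ≤ k', p = (cumW w n, cumY w y' n)}

/-- Cumulative fitted values. -/
noncomputable def GG {k' : ℕ} (w : Fin k' → ℕ) (g : ℕ → ℝ) (n : ℕ) : ℝ :=
  ∑ l ∈ Finset.univ.filter (fun l : Fin k' => (l : ℕ) < n), (w l : ℝ) * g (l : ℕ)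

open Finset

/-- Split a sum over `{l < b}` into `{l < a}` plus `{a ≤ l < b}`. -/
lemma sum_lt_split {k' : ℕ} (F : Fin k' → ℝ) (a b : ℕ) (hab : a ≤ b) :
    ∑ l ∈ Finset.univ.filter (fun l : Fin k' => (l : ℕ) < b), F l =
      (∑ l ∈ Finset.univ.filter (fun l : Fin k' => (l : ℕ) < a), F l) +
      ∑ l ∈ Finset.univ.filter (fun l : Fin k' => a ≤ (l : ℕ) ∧ (l : ℕ) < b), F l := by
  rw [← Finset.sum_union]
  · congr 1
    ext l
    simp only [Finset.mem_union, Finset.mem_filter, Finset.mem_univ, true_and]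
    omega
  · simp only [Finset.disjoint_left, Finset.mem_filter, Finset.mem_univ, true_and]
    omega

lemma GG_diff {k' : ℕ} (w : Fin k' → ℕ) (g : ℕ → ℝ) {a b : ℕ} (hab : a ≤ b) :
    GG w g b - GG w g a =
      ∑ l ∈ Finset.univ.filter (fun l : Fin k' => a ≤ (l : ℕ) ∧ (l : ℕ) < b),
        (w l : ℝ) * g (l : ℕ) := by
  rw [GG, GG, sum_lt_split _ a b hab]; ring

lemma cumW_diff {k' : ℕ} (w : Fin k' → ℕ) {a b : ℕ} (hab : a ≤ b) :
    cumW w b - cumW w a =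
      ∑ l ∈ Finset.univ.filter (fun l : Fin k' => a ≤ (l : ℕ) ∧ (l : ℕ) < b),
        (w l : ℝ) := by
  rw [cumW, cumW, sum_lt_split _ a b hab]; ring

lemma cumW_mono {k' : ℕ} (w : Fin k' → ℕ) {a b : ℕ} (hab : a ≤ b) :
    cumW w a ≤ cumW w b := by
  have h := cumW_diff w hab
  have : 0 ≤ cumW w b - cumW w a := by
    rw [h]; exact Finset.sum_nonneg fun l _ => by positivity
  linarith

/-- Core lemma: the GCM of the CSD evaluated at the cumulative weights equals
the cumulative fitted values `GG`, given the touching conditions. -/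
lemma gcm_eq {k' : ℕ} (hk' : 0 < k') (w : Fin k' → ℕ) (hwpos : ∀ j, 0 < w j)
    (y' : Fin k' → ℝ) (g : ℕ → ℝ) (hg : Monotone g)
    (hGY : ∀ n ≤ k', GG w g n ≤ cumY w y' n)
    (htouchk : GG w g k' = cumY w y' k')
    (htouch : ∀ n, 0 < n → n < k' → g (n-1) < g n → GG w g n = cumY w y' n) :
    ∀ n ≤ k', gcm (csd w y') (cumW w n) = GG w g n := by
  intro n hn
  have hne : (Finset.univ : Finset (Fin k')).Nonempty := ⟨⟨0, hk'⟩, mem_univ _⟩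
  set L : Fin k' → ℝ → ℝ := fun j t => GG w g j + g (j : ℕ) * (t - cumW w j) with hL
  set c0 : ℝ → ℝ := fun t => Finset.univ.sup' hne (fun j => L j t) with hc0
  -- each affine piece lies below GG at the grid points
  have hLle : ∀ (m : ℕ), m ≤ k' → ∀ j : Fin k', L j (cumW w m) ≤ GG w g m := by
    intro m hm j
    rcases le_or_gt (j : ℕ) m with hjm | hmj
    · have h1 := cumW_diff w hjm
      have h2 := GG_diff w g hjm
      have key : g (j : ℕ) * (cumW w m - cumW w j) ≤ GG w g m - GG w g j := by
        rw [h1, h2, Finset.mul_sum]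
        apply Finset.sum_le_sum
        intro l hl
        simp only [Finset.mem_filter, Finset.mem_univ, true_and] at hl
        have hgl : g (j : ℕ) ≤ g (l : ℕ) := hg hl.1
        have : (0:ℝ) ≤ (w l : ℝ) := by positivity
        nlinarith
      simp only [hL]; linarith
    · have hjm : m ≤ (j : ℕ) := le_of_lt hmj
      have h1 := cumW_diff w hjm
      have h2 := GG_diff w g hjm
      have key : GG w g j - GG w g m ≤ g (j : ℕ) * (cumW w j - cumW w m) := by
        rw [h1, h2, Finset.mul_sum]
        apply Finset.sum_le_sum
        intro l hl
        simp only [Finset.mem_filter, Finset.mem_univ, true_and] at hl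
        have hgl : g (l : ℕ) ≤ g (j : ℕ) := hg (le_of_lt hl.2)
        have : (0:ℝ) ≤ (w l : ℝ) := by positivity
        nlinarith
      simp only [hL]; linarith
  -- singleton interval sums
  have hsingle : ∀ (a : ℕ) (ha : a < k'),
      (Finset.univ.filter (fun l : Fin k' => a ≤ (l : ℕ) ∧ (l : ℕ) < a + 1)) =
        {(⟨a, ha⟩ : Fin k')} := by
    intro a ha
    ext l
    simp only [Finset.mem_filter, Finset.mem_univ, true_and, Finset.mem_singleton,
      Fin.ext_iff]
    omega
  have hGGstep : ∀ (a : ℕ) (ha : a < k'),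
      GG w g (a+1) - GG w g a = (w ⟨a, ha⟩ : ℝ) * g a := by
    intro a ha
    rw [GG_diff w g (Nat.le_succ a), hsingle a ha, Finset.sum_singleton]
  have hWstep : ∀ (a : ℕ) (ha : a < k'),
      cumW w (a+1) - cumW w a = (w ⟨a, ha⟩ : ℝ) := by
    intro a ha
    rw [cumW_diff w (Nat.le_succ a), hsingle a ha, Finset.sum_singleton]
  -- value of c0 at grid points
  have hc0val : ∀ m ≤ k', c0 (cumW w m) = GG w g m := by
    intro m hm
    apply le_antisymm (Finset.sup'_le _ _ (fun j _ => hLle m hm j))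
    rcases lt_or_eq_of_le hm with hmk | hmk
    · have hLval : L ⟨m, hmk⟩ (cumW w m) = GG w g m := by simp [hL]
      have hle := Finset.le_sup' (fun j => L j (cumW w m)) (mem_univ (⟨m, hmk⟩ : Fin k'))
      rw [← hLval]
      exact hle
    · subst hmk
      have hk1 : m - 1 < m := by omega
      have hLval : L ⟨m-1, hk1⟩ (cumW w m) = GG w g m := by
        simp only [hL, Fin.val_mk]
        have e1 := hGGstep (m-1) hk1
        have e2 := hWstep (m-1) hk1
        have hm1 : m - 1 + 1 = m := by omega
        rw [hm1] at e1 e2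
        rw [e2]
        linarith [e1, mul_comm (g (m-1)) ((w ⟨m-1, hk1⟩ : ℝ))]
      have hle := Finset.le_sup' (fun j => L j (cumW w m)) (mem_univ (⟨m-1, hk1⟩ : Fin m))
      rw [← hLval]
      exact hle
  -- convexity of c0
  have hc0conv : ConvexOn ℝ Set.univ c0 := by
    refine ⟨convex_univ, ?_⟩
    intro x _ z _ a b ha hb hab
    simp only [smul_eq_mul]
    apply Finset.sup'_le
    intro j _
    have hLj : L j (a * x + b * z) = a * L j x + b * L j z := by
      have hb' : b = 1 - a := by linarith
      subst hb'
      simp only [hL]; ring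
    rw [hLj]
    have h1 : L j x ≤ c0 x := by
      simp only [hc0]; exact Finset.le_sup' (fun j' => L j' x) (mem_univ j)
    have h2 : L j z ≤ c0 z := by
      simp only [hc0]; exact Finset.le_sup' (fun j' => L j' z) (mem_univ j)
    have k1 := mul_le_mul_of_nonneg_left h1 ha
    have k2 := mul_le_mul_of_nonneg_left h2 hb
    linarith
  -- c0 lies below the CSD
  have hc0below : ∀ q ∈ csd w y', c0 q.1 ≤ q.2 := by
    rintro q ⟨m, hm, rfl⟩
    simpa [hc0val m hm] using hGY m hm
  -- upper bound for any admissible convex function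
  have hub : ∀ c : ℝ → ℝ, ConvexOn ℝ Set.univ c → (∀ q ∈ csd w y', c q.1 ≤ q.2) →
      c (cumW w n) ≤ GG w g n := by
    intro c hconv hbelow
    have hcY : ∀ m ≤ k', c (cumW w m) ≤ cumY w y' m := fun m hm =>
      hbelow _ ⟨m, hm, rfl⟩
    by_cases hnk : n = k'
    · subst hnk; exact (hcY n le_rfl).trans_eq htouchk.symm
    have hnk' : n < k' := lt_of_le_of_ne hn hnk
    -- the touching point to the left
    classical
    set P : ℕ → Prop := fun m => m = 0 ∨ (0 < m ∧ g (m-1) < g m) with hPdef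
    have hP0 : P 0 := Or.inl rfl
    set a := Nat.findGreatest P n with hadef
    have hPa : P a := Nat.findGreatest_spec (Nat.zero_le n) hP0
    have han : a ≤ n := Nat.findGreatest_le n
    have hGa : GG w g a = cumY w y' a := by
      rcases hPa with h0 | ⟨hpos, hlt⟩
      · have hemp : Finset.univ.filter (fun l : Fin k' => (l : ℕ) < 0) = ∅ := by
          ext l; simp
        rw [h0, GG, cumY, hemp, Finset.sum_empty, Finset.sum_empty]
      · exact htouch a hpos (lt_of_le_of_lt han hnk') hlt
    -- the touching point to the right
    set Q : ℕ → Prop := fun m => n < m ∧ (m = k' ∨ g (m-1) < g m) with hQdef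
    have hQex : ∃ m, Q m := ⟨k', hnk', Or.inl rfl⟩
    set b := Nat.find hQex with hbdef
    have hQb : Q b := Nat.find_spec hQex
    have hnb : n < b := hQb.1
    have hbk : b ≤ k' := by
      by_contra h
      push_neg at h
      exact (Nat.find_min hQex (by omega)) ⟨hnk', Or.inl rfl⟩
    have hab : a < b := lt_of_le_of_lt han hnb
    -- constancy of g on [a, b)
    have hconst : ∀ m, a ≤ m → m < b → g m = g a := by
      intro m
      induction m with
      | zero => intro ham _; have : a = 0 := Nat.le_zero.mp ham; rw [this]
      | succ p ih =>
        intro ham hmb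
        rcases eq_or_lt_of_le ham with he | hl
        · rw [← he]
        · have hpa : a ≤ p := by omega
          have hgp := ih hpa (by omega)
          have hnlt : ¬ g p < g (p+1) := by
            intro hlt
            rcases le_or_gt (p+1) n with h1 | h2
            · exact Nat.findGreatest_is_greatest hl h1 (Or.inr ⟨Nat.succ_pos p, by simpa using hlt⟩)
            · exact Nat.find_min hQex (show p+1 < b by omega) ⟨h2, Or.inr (by simpa using hlt)⟩
          have : g (p+1) = g p := le_antisymm (not_lt.mp hnlt) (hg (Nat.le_succ p))
          rw [this, hgp]
    have hGb : GG w g b = cumY w y' b := by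
      by_cases hbkk : b = k'
      · rw [hbkk]; exact htouchk
      · rcases hQb.2 with h | h
        · exact absurd h hbkk
        · exact htouch b (by omega) (lt_of_le_of_ne hbk hbkk) h
    -- linearity on the block
    have hlin : ∀ m, a ≤ m → m ≤ b → GG w g m - GG w g a = g a * (cumW w m - cumW w a) := by
      intro m ham hmb
      rw [GG_diff w g ham, cumW_diff w ham, Finset.mul_sum]
      apply Finset.sum_congr rfl
      intro l hl
      simp only [Finset.mem_filter, Finset.mem_univ, true_and] at hl
      rw [hconst l hl.1 (lt_of_lt_of_le hl.2 hmb), mul_comm]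
    -- strict increase of cumW on the block
    have hWab : cumW w a < cumW w b := by
      have h := cumW_diff w (le_of_lt hab)
      have hmem : (⟨a, lt_of_le_of_lt han hnk'⟩ : Fin k') ∈
          Finset.univ.filter (fun l : Fin k' => a ≤ (l : ℕ) ∧ (l : ℕ) < b) := by
        simp only [Finset.mem_filter, Finset.mem_univ, true_and]
        exact ⟨le_refl a, hab⟩
      have hpos : (0:ℝ) < ∑ l ∈ Finset.univ.filter
          (fun l : Fin k' => a ≤ (l : ℕ) ∧ (l : ℕ) < b), (w l : ℝ) := by
        apply Finset.sum_pos' (fun l _ => by positivity)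
        exact ⟨_, hmem, by exact_mod_cast hwpos _⟩
      linarith
    -- chord inequality
    set lam := (cumW w b - cumW w n) / (cumW w b - cumW w a) with hlam
    set mu := (cumW w n - cumW w a) / (cumW w b - cumW w a) with hmu
    have hden : (0:ℝ) < cumW w b - cumW w a := by linarith
    have hlam0 : 0 ≤ lam := div_nonneg (by linarith [cumW_mono w (le_of_lt hnb)]) (le_of_lt hden)
    have hmu0 : 0 ≤ mu := div_nonneg (by linarith [cumW_mono w han]) (le_of_lt hden)
    have hne0 : cumW w b - cumW w a ≠ 0 := ne_of_gt (by linarith)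
    have hsum : lam + mu = 1 := by
      rw [hlam, hmu, ← add_div, div_eq_one_iff_eq hne0]; ring
    have hcomb : lam * cumW w a + mu * cumW w b = cumW w n := by
      rw [hlam, hmu]; field_simp; ring
    have hchord := hconv.2 (Set.mem_univ (cumW w a)) (Set.mem_univ (cumW w b)) hlam0 hmu0 hsum
    simp only [smul_eq_mul] at hchord
    rw [hcomb] at hchord
    have hea : c (cumW w a) ≤ cumY w y' a := hcY a (le_trans han hn)
    have heb : c (cumW w b) ≤ cumY w y' b := hcY b hbk
    have e1 := hlin b (le_of_lt hab) (le_refl b)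
    have e2 := hlin n han (le_of_lt hnb)
    have hmu2 : mu * (cumW w b - cumW w a) = cumW w n - cumW w a := by
      rw [hmu]; exact div_mul_cancel₀ _ hne0
    calc c (cumW w n) ≤ lam * c (cumW w a) + mu * c (cumW w b) := hchord
      _ ≤ lam * cumY w y' a + mu * cumY w y' b :=
          add_le_add (mul_le_mul_of_nonneg_left hea hlam0) (mul_le_mul_of_nonneg_left heb hmu0)
      _ = lam * GG w g a + mu * GG w g b := by rw [hGa, hGb]
      _ = GG w g n := by
          have e3 : mu * (GG w g b - GG w g a) = g a * (cumW w n - cumW w a) := by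
            rw [e1, ← mul_assoc, mul_comm mu (g a), mul_assoc, hmu2]
          linear_combination (GG w g a) * hsum + e3 - e2
  -- conclude
  unfold gcm
  apply IsGreatest.csSup_eq
  constructor
  · exact ⟨c0, hc0conv, hc0below, (hc0val n hn).symm⟩
  · rintro v ⟨c, hcv, hcb, rfl⟩
    exact hub c hcv hcb
/-- Barlow et al., Theorem 1.1: the isotonic regression fit equals the slope
of the greatest convex minorant of the cumulative sum diagram over the
interval corresponding to each score. -/
theorem stmt_14 (k k' : ℕ) (hk : 0 < k) (s y : Fin k → ℝ)
    (hs : Monotone s) (hy : ∀ i, y i ∈ Set.Icc (0:ℝ) 1)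
    (s' : Fin k' → ℝ) (hs' : StrictMono s')
    (hcover : ∀ i, ∃ j, s i = s' j)
    (w : Fin k' → ℕ)
    (hw : ∀ j, w j = (Finset.univ.filter (fun i : Fin k => s i = s' j)).card)
    (hwpos : ∀ j, 0 < w j)
    (y' : Fin k' → ℝ)
    (hy' : ∀ j, y' j =
      (∑ i ∈ Finset.univ.filter (fun i : Fin k => s i = s' j), y i) / (w j : ℝ))
    (f : ℝ → ℝ) (hf : Monotone f)
    (hmin : ∀ g : ℝ → ℝ, Monotone g →
      ∑ i, (f (s i) - y i) ^ 2 ≤ ∑ i, (g (s i) - y i) ^ 2) :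
    ∀ i : Fin k, ∀ j : Fin k', s i = s' j →
      f (s i) =
        (gcm (csd w y') (cumW w (j + 1)) - gcm (csd w y') (cumW w j)) / (w j : ℝ) := by
  classical
  have hk' : 0 < k' := by
    obtain ⟨j0, -⟩ := hcover ⟨0, hk⟩
    have := j0.isLt; omega
  -- classifier of data points into score groups
  obtain ⟨κ, hκ⟩ : ∃ κ : Fin k → Fin k', ∀ i, s i = s' (κ i) :=
    ⟨fun i => (hcover i).choose, fun i => (hcover i).choose_spec⟩
  have hfiber : ∀ j : Fin k', Finset.univ.filter (fun i => κ i = j)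
      = Finset.univ.filter (fun i : Fin k => s i = s' j) := by
    intro j
    ext i
    simp only [Finset.mem_filter, Finset.mem_univ, true_and]
    constructor
    · rintro rfl; exact hκ i
    · intro h; exact hs'.injective (by rw [← hκ i, ← h])
  have hwne : ∀ j : Fin k', (w j : ℝ) ≠ 0 := fun j =>
    Nat.cast_ne_zero.mpr (hwpos j).ne'
  have hcard : ∀ j : Fin k',
      (((Finset.univ.filter (fun i => κ i = j)).card : ℝ)) = (w j : ℝ) := by
    intro j; rw [hfiber, hw j]
  have hysum : ∀ j : Fin k',
      ∑ i ∈ Finset.univ.filter (fun i => κ i = j), y i = y' j * (w j : ℝ) := by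
    intro j
    rw [hfiber, eq_comm, hy' j, div_mul_cancel₀ _ (hwne j)]
  -- fiberwise quadratic sums
  have hfibersum : ∀ (j : Fin k') (t : ℝ),
      ∑ i ∈ Finset.univ.filter (fun i => κ i = j), (t - y i)^2
        = (w j : ℝ) * (t - y' j)^2
          + ∑ i ∈ Finset.univ.filter (fun i => κ i = j), (y' j - y i)^2 := by
    intro j t
    have e : ∀ i ∈ Finset.univ.filter (fun i => κ i = j),
        (t - y i)^2 = (t - y' j)^2 + 2*(t - y' j)*(y' j - y i) + (y' j - y i)^2 :=
      fun i _ => by ring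
    rw [Finset.sum_congr rfl e, Finset.sum_add_distrib, Finset.sum_add_distrib,
      Finset.sum_const, nsmul_eq_mul, ← Finset.mul_sum]
    have hz : ∑ i ∈ Finset.univ.filter (fun i => κ i = j), (y' j - y i) = 0 := by
      rw [Finset.sum_sub_distrib, Finset.sum_const, nsmul_eq_mul, hysum j, hcard j]
      ring
    rw [hz, mul_zero, add_zero, hcard j]
  set C : ℝ := ∑ j : Fin k', ∑ i ∈ Finset.univ.filter (fun i => κ i = j), (y' j - y i)^2
    with hC
  have hdecomp : ∀ H : Fin k' → ℝ,
      ∑ i, (H (κ i) - y i)^2 = (∑ j, (w j : ℝ) * (H j - y' j)^2) + C := by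
    intro H
    rw [← Finset.sum_fiberwise Finset.univ κ (fun i => (H (κ i) - y i)^2)]
    have hinner : ∀ j : Fin k',
        ∑ i ∈ Finset.univ.filter (fun i => κ i = j), (H (κ i) - y i)^2
          = (w j : ℝ) * (H j - y' j)^2
            + ∑ i ∈ Finset.univ.filter (fun i => κ i = j), (y' j - y i)^2 := by
      intro j
      have e : ∀ i ∈ Finset.univ.filter (fun i => κ i = j),
          (H (κ i) - y i)^2 = (H j - y i)^2 := by
        intro i hi
        simp only [Finset.mem_filter, Finset.mem_univ, true_and] at hi
        rw [hi]
      rw [Finset.sum_congr rfl e, hfibersum j (H j)]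
    rw [Finset.sum_congr rfl (fun j _ => hinner j), Finset.sum_add_distrib, hC]
  -- the isotonic fit as a vector
  set gh : Fin k' → ℝ := fun j => f (s' j) with hgh
  have hghmono : Monotone gh := fun a b hab => hf (hs'.monotone hab)
  have hfs : ∀ i, f (s i) = gh (κ i) := fun i => by rw [hκ i]
  -- the key vector-level minimality
  have hkey : ∀ v : Fin k' → ℝ, Monotone v →
      ∑ j, (w j : ℝ) * (gh j - y' j)^2 ≤ ∑ j, (w j : ℝ) * (v j - y' j)^2 := by
    intro v hv
    set gv : ℝ → ℝ := fun x =>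
      if h : (Finset.univ.filter (fun j : Fin k' => s' j ≤ x)).Nonempty
      then v ((Finset.univ.filter (fun j : Fin k' => s' j ≤ x)).max' h)
      else v ⟨0, hk'⟩ with hgvdef
    have hgvmono : Monotone gv := by
      intro x x' hxx'
      simp only [hgvdef]
      have hsub : (Finset.univ.filter (fun j : Fin k' => s' j ≤ x)) ⊆
          (Finset.univ.filter (fun j : Fin k' => s' j ≤ x')) := by
        intro l hl
        simp only [Finset.mem_filter, Finset.mem_univ, true_and] at *
        linarith
      by_cases hA : (Finset.univ.filter (fun j : Fin k' => s' j ≤ x)).Nonempty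
      · have hA' : (Finset.univ.filter (fun j : Fin k' => s' j ≤ x')).Nonempty :=
          hA.mono hsub
        rw [dif_pos hA, dif_pos hA']
        exact hv (Finset.max'_subset hA hsub)
      · rw [dif_neg hA]
        by_cases hA' : (Finset.univ.filter (fun j : Fin k' => s' j ≤ x')).Nonempty
        · rw [dif_pos hA']
          exact hv (by simp [Fin.le_def])
        · rw [dif_neg hA']
    have hgvval : ∀ j : Fin k', gv (s' j) = v j := by
      intro j
      simp only [hgvdef]
      have hj : j ∈ Finset.univ.filter (fun l : Fin k' => s' l ≤ s' j) := by simp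
      have hA : (Finset.univ.filter (fun l : Fin k' => s' l ≤ s' j)).Nonempty := ⟨j, hj⟩
      rw [dif_pos hA]
      congr 1
      apply le_antisymm
      · apply Finset.max'_le
        intro l hl
        simp only [Finset.mem_filter, Finset.mem_univ, true_and] at hl
        exact (hs'.le_iff_le).mp hl
      · exact Finset.le_max' _ j hj
    have h1 := hmin gv hgvmono
    have hL : ∑ i, (f (s i) - y i)^2 = (∑ j, (w j : ℝ) * (gh j - y' j)^2) + C := by
      rw [Finset.sum_congr rfl (fun i _ => by rw [hfs i]), hdecomp gh]
    have hR : ∑ i, (gv (s i) - y i)^2 = (∑ j, (w j : ℝ) * (v j - y' j)^2) + C := by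
      have e : ∀ i : Fin k, (gv (s i) - y i)^2 = (v (κ i) - y i)^2 := by
        intro i
        rw [hκ i, hgvval (κ i)]
      rw [Finset.sum_congr rfl (fun i _ => e i), hdecomp v]
    rw [hL, hR] at h1
    linarith
  -- the slack sums and their variational properties
  set Dn : ℕ → ℝ :=
    fun n => ∑ j : Fin k', (if n ≤ (j : ℕ) then (w j : ℝ) * (gh j - y' j) else 0)
    with hDn
  set Bn : ℕ → ℝ :=
    fun n => ∑ j : Fin k', (if n ≤ (j : ℕ) then (w j : ℝ) else 0) with hBn
  have hexpand : ∀ (n : ℕ) (ε : ℝ),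
      ∑ j, (w j : ℝ) * ((gh j + ε * (if n ≤ (j : ℕ) then (1:ℝ) else 0)) - y' j)^2
        = (∑ j, (w j : ℝ) * (gh j - y' j)^2) + (2*ε*Dn n + ε^2*Bn n) := by
    intro n ε
    simp only [hDn, hBn, Finset.mul_sum, ← Finset.sum_add_distrib]
    apply Finset.sum_congr rfl
    intro j _
    by_cases h : n ≤ (j : ℕ) <;> simp only [if_pos, if_neg, h, if_true, if_false,
      mul_zero, mul_one, add_zero] <;> ring
  have hBpos : ∀ n, n < k' → 0 < Bn n := by
    intro n hn
    simp only [hBn]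
    apply Finset.sum_pos' (fun j _ => by split <;> positivity)
    refine ⟨⟨n, hn⟩, Finset.mem_univ _, ?_⟩
    rw [if_pos (le_refl n)]
    exact_mod_cast hwpos ⟨n, hn⟩
  have hDhigh : ∀ n, k' ≤ n → Dn n = 0 := by
    intro n hn
    simp only [hDn]
    apply Finset.sum_eq_zero
    intro j _
    rw [if_neg]
    have := j.isLt; omega
  have hvmono_pos : ∀ (n : ℕ) (ε : ℝ), 0 ≤ ε →
      Monotone (fun j : Fin k' => gh j + ε * (if n ≤ (j : ℕ) then (1:ℝ) else 0)) := by
    intro n ε hε a b hab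
    have hab' : (a : ℕ) ≤ (b : ℕ) := hab
    have h1 : gh a ≤ gh b := hghmono hab
    dsimp only
    by_cases ha : n ≤ (a : ℕ)
    · rw [if_pos ha, if_pos (le_trans ha hab')]
      linarith
    · by_cases hb : n ≤ (b : ℕ)
      · rw [if_neg ha, if_pos hb]
        nlinarith
      · rw [if_neg ha, if_neg hb]
        linarith
  have hF1 : ∀ n, 0 ≤ Dn n := by
    intro n
    rcases lt_or_ge n k' with hn | hn
    · by_contra hneg
      push_neg at hneg
      have hB := hBpos n hn
      set ε : ℝ := -Dn n / Bn n with hε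
      have hε0 : 0 ≤ ε := div_nonneg (by linarith) (le_of_lt hB)
      have hm := hkey _ (hvmono_pos n ε hε0)
      rw [hexpand n ε] at hm
      have h2 : 0 ≤ 2*ε*Dn n + ε^2*Bn n := by linarith
      have h3 : 2*ε*Dn n + ε^2*Bn n = -((Dn n)^2/Bn n) := by
        rw [hε]; field_simp; ring
      have h4 : 0 < (Dn n)^2 / Bn n := div_pos (by nlinarith) hB
      rw [h3] at h2
      linarith
    · rw [hDhigh n hn]
  have hF2 : Dn 0 = 0 := by
    refine le_antisymm ?_ (hF1 0)
    by_contra hpos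
    push_neg at hpos
    have hB := hBpos 0 hk'
    set ε : ℝ := -Dn 0 / Bn 0 with hε
    have hmono : Monotone (fun j : Fin k' => gh j + ε * (if 0 ≤ (j : ℕ) then (1:ℝ) else 0)) := by
      intro a b hab
      dsimp only
      rw [if_pos (Nat.zero_le _), if_pos (Nat.zero_le _)]
      have := hghmono hab
      linarith
    have hm := hkey _ hmono
    rw [hexpand 0 ε] at hm
    have h2 : 0 ≤ 2*ε*Dn 0 + ε^2*Bn 0 := by linarith
    have h3 : 2*ε*Dn 0 + ε^2*Bn 0 = -((Dn 0)^2/Bn 0) := by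
      rw [hε]; field_simp; ring
    have h4 : 0 < (Dn 0)^2 / Bn 0 := div_pos (by nlinarith) hB
    rw [h3] at h2
    linarith
  have hF3 : ∀ (n : ℕ) (h0 : 0 < n) (hn : n < k'),
      gh ⟨n-1, by omega⟩ < gh ⟨n, hn⟩ → Dn n = 0 := by
    intro n h0 hn hlt
    refine le_antisymm ?_ (hF1 n)
    by_contra hpos
    push_neg at hpos
    have hB := hBpos n hn
    set δ : ℝ := gh ⟨n-1, by omega⟩ - gh ⟨n, hn⟩ with hδ
    have hδneg : δ < 0 := by rw [hδ]; linarith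
    set ε : ℝ := max δ (-Dn n / Bn n) with hε
    have hεneg : ε < 0 := max_lt hδneg (div_neg_of_neg_of_pos (by linarith) hB)
    have hεδ : δ ≤ ε := le_max_left _ _
    have hεD : -Dn n ≤ ε * Bn n := by
      have h5 : -Dn n / Bn n ≤ ε := le_max_right _ _
      calc -Dn n = (-Dn n / Bn n) * Bn n := (div_mul_cancel₀ _ (ne_of_gt hB)).symm
        _ ≤ ε * Bn n := mul_le_mul_of_nonneg_right h5 (le_of_lt hB)
    have hmono : Monotone (fun j : Fin k' => gh j + ε * (if n ≤ (j : ℕ) then (1:ℝ) else 0)) := by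
      intro a b hab
      have hab' : (a : ℕ) ≤ (b : ℕ) := hab
      have h1 : gh a ≤ gh b := hghmono hab
      dsimp only
      by_cases ha : n ≤ (a : ℕ)
      · rw [if_pos ha, if_pos (le_trans ha hab')]
        linarith
      · by_cases hb : n ≤ (b : ℕ)
        · rw [if_neg ha, if_pos hb]
          have h6 : gh a ≤ gh ⟨n-1, by omega⟩ := hghmono (by
            rw [Fin.le_def]; simp only [Fin.val_mk]; omega)
          have h7 : gh ⟨n, hn⟩ ≤ gh b := hghmono (by
            rw [Fin.le_def]; simp only [Fin.val_mk]; omega)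
          have h8 : gh ⟨n-1, by omega⟩ = gh ⟨n, hn⟩ + δ := by rw [hδ]; ring
          linarith
        · rw [if_neg ha, if_neg hb]
          linarith
    have hm := hkey _ hmono
    rw [hexpand n ε] at hm
    have h2 : 0 ≤ 2*ε*Dn n + ε^2*Bn n := by linarith
    have h8 : ε^2*Bn n ≤ -(ε*Dn n) := by nlinarith
    have h9 : ε * Dn n < 0 := mul_neg_of_neg_of_pos hεneg hpos
    linarith
  -- the extension of gh to ℕ
  set g : ℕ → ℝ := fun m => if h : m < k' then gh ⟨m, h⟩ else gh ⟨k'-1, by omega⟩ with hgdef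
  have hg_eq : ∀ j : Fin k', g (j : ℕ) = gh j := by
    intro j
    simp only [hgdef]
    rw [dif_pos j.isLt]
  have hgmono : Monotone g := by
    intro m m' h
    simp only [hgdef]
    by_cases h1 : m < k'
    · rw [dif_pos h1]
      by_cases h2 : m' < k'
      · rw [dif_pos h2]
        exact hghmono (by rw [Fin.le_def]; simpa using h)
      · rw [dif_neg h2]
        exact hghmono (by rw [Fin.le_def]; simp only [Fin.val_mk]; omega)
    · rw [dif_neg h1, dif_neg (by omega : ¬ m' < k')]
  -- the cumulative slack identity
  have hYG : ∀ n, cumY w y' n - GG w g n = Dn n - Dn 0 := by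
    intro n
    have hsplit : Dn 0 - Dn n
        = ∑ j : Fin k', (if (j : ℕ) < n then (w j : ℝ) * (gh j - y' j) else 0) := by
      simp only [hDn, ← Finset.sum_sub_distrib]
      apply Finset.sum_congr rfl
      intro j _
      by_cases h : n ≤ (j : ℕ)
      · rw [if_pos (Nat.zero_le _), if_pos h, if_neg (by omega)]
        ring
      · rw [if_pos (Nat.zero_le _), if_neg h, if_pos (by omega)]
        ring
    have h2 : ∑ j : Fin k', (if (j : ℕ) < n then (w j : ℝ) * (gh j - y' j) else 0)
        = GG w g n - cumY w y' n := by
      have e : ∀ j : Fin k',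
          (if (j : ℕ) < n then (w j : ℝ) * (gh j - y' j) else 0)
            = (if (j : ℕ) < n then ((w j : ℝ) * g (j : ℕ) - y' j * (w j : ℝ)) else 0) := by
        intro j
        rw [hg_eq j]
        by_cases h : (j : ℕ) < n
        · rw [if_pos h, if_pos h]; ring
        · rw [if_neg h, if_neg h]
      rw [Finset.sum_congr rfl (fun j _ => e j), ← Finset.sum_filter, GG, cumY,
        Finset.sum_sub_distrib]
    linarith [hsplit, h2]
  have hGY : ∀ n ≤ k', GG w g n ≤ cumY w y' n := by
    intro n _
    have := hYG n
    have := hF1 n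
    rw [hF2] at *
    linarith [hYG n, hF1 n]
  have htouchk : GG w g k' = cumY w y' k' := by
    have := hYG k'
    rw [hF2, hDhigh k' le_rfl] at this
    linarith
  have htouch : ∀ n, 0 < n → n < k' → g (n-1) < g n → GG w g n = cumY w y' n := by
    intro n h0 hn hlt
    have hgl : g (n-1) = gh ⟨n-1, by omega⟩ := by
      simp only [hgdef]; rw [dif_pos (by omega : n - 1 < k')]
    have hgn : g n = gh ⟨n, hn⟩ := by
      simp only [hgdef]; rw [dif_pos hn]
    rw [hgl, hgn] at hlt
    have := hYG n
    rw [hF2, hF3 n h0 hn hlt] at this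
    linarith
  -- conclusion
  intro i j hij
  have hgcm := gcm_eq hk' w hwpos y' g hgmono hGY htouchk htouch
  have hj1 : (j : ℕ) + 1 ≤ k' := j.isLt
  rw [hgcm ((j : ℕ) + 1) hj1, hgcm (j : ℕ) (le_of_lt j.isLt)]
  have hsingle : (Finset.univ.filter
      (fun l : Fin k' => (j : ℕ) ≤ (l : ℕ) ∧ (l : ℕ) < (j : ℕ) + 1)) = {j} := by
    ext l
    simp only [Finset.mem_filter, Finset.mem_univ, true_and, Finset.mem_singleton,
      Fin.ext_iff]
    omega
  have hstep : GG w g ((j : ℕ) + 1) - GG w g (j : ℕ) = (w j : ℝ) * gh j := by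
    rw [GG_diff w g (Nat.le_succ (j : ℕ)), hsingle, Finset.sum_singleton, hg_eq j]
  rw [hstep, hij, mul_comm, mul_div_assoc, div_self (hwne j), mul_one]
end

section
/- Let (X_1,Y_1),...,(X_l,Y_l),(X,Y) be i.i.d. random observations with Y in {0,1}, and let (P_0, P_1) be the IVAP prediction for X. Then there exists a selector S (a {0,1}-valued random variable) such that E(Y | P_S) = P_S almost surely; in fact S = Y works. -/
open MeasureTheory ProbabilityTheory

/-- The value at point `j` of the isotonic regression fitted to scores `s`,
weights `w` and values `y`, via the standard minimax formula. -/
noncomputable def isoVal {n : ℕ} (s w y : Fin n → ℝ) (j : Fin n) : ℝ :=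
  (Finset.univ.filter (fun a => s a ≤ s j)).sup'
    ⟨j, by simp⟩
    (fun a =>
      (Finset.univ.filter (fun b => s j ≤ s b)).inf'
        ⟨j, by simp⟩
        (fun b =>
          (∑ i ∈ Finset.univ.filter (fun i => s a ≤ s i ∧ s i ≤ s b), w i * y i) /
          (∑ i ∈ Finset.univ.filter (fun i => s a ≤ s i ∧ s i ≤ s b), w i)))

/-- The IVAP prediction `(f₀(s), f₁(s))`: isotonic regression fitted to the
calibration scores/labels together with the test score `s` labelled `ε`,
evaluated at the test point. -/
noncomputable def ivapPred {𝓧 : Type*} {m k : ℕ}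
    (A : (Fin m → 𝓧 × ℝ) → 𝓧 → ℝ)
    (train : Fin m → 𝓧 × ℝ) (calib : Fin k → 𝓧 × ℝ) (x : 𝓧) (ε : ℝ) : ℝ :=
  isoVal
    (Fin.snoc (fun i => A train (calib i).1) (A train x))
    (fun _ => 1)
    (Fin.snoc (fun i => (calib i).2) ε)
    (Fin.last k)

namespace IVAPaux

open Finset

variable {n : ℕ}

/-- the block of indices with score between `s a` and `s b`. -/
noncomputable def blk (s : Fin n → ℝ) (a b : Fin n) : Finset (Fin n) :=
  Finset.univ.filter (fun i => s a ≤ s i ∧ s i ≤ s b)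

noncomputable def avg (s y : Fin n → ℝ) (a b : Fin n) : ℝ :=
  (∑ i ∈ blk s a b, y i) / ((blk s a b).card : ℝ)

noncomputable def inn (s y : Fin n → ℝ) (j a : Fin n) : ℝ :=
  (Finset.univ.filter (fun b => s j ≤ s b)).inf' ⟨j, by simp⟩ (fun b => avg s y a b)

noncomputable def FU (s y : Fin n → ℝ) (U : Finset (Fin n)) (j : Fin n) : ℝ :=
  if h : (U.filter (fun a => s a ≤ s j)).Nonempty
  then (U.filter (fun a => s a ≤ s j)).sup' h (inn s y j) else 0

lemma mem_blk {s : Fin n → ℝ} {a b i : Fin n} :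
    i ∈ blk s a b ↔ s a ≤ s i ∧ s i ≤ s b := by simp [blk]

lemma self_mem_blk_left {s : Fin n → ℝ} {a b : Fin n} (h : s a ≤ s b) :
    a ∈ blk s a b := mem_blk.2 ⟨le_rfl, h⟩

lemma self_mem_blk_right {s : Fin n → ℝ} {a b : Fin n} (h : s a ≤ s b) :
    b ∈ blk s a b := mem_blk.2 ⟨h, le_rfl⟩

lemma blk_card_pos {s : Fin n → ℝ} {a b : Fin n} (h : s a ≤ s b) :
    0 < ((blk s a b).card : ℝ) := by
  have : (blk s a b).Nonempty := ⟨a, self_mem_blk_left h⟩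
  exact_mod_cast Finset.card_pos.2 this

lemma isoVal_eq_FU (s y : Fin n → ℝ) (j : Fin n) :
    isoVal s (fun _ => 1) y j = FU s y Finset.univ j := by
  have hne : (Finset.univ.filter (fun a => s a ≤ s j)).Nonempty := ⟨j, by simp⟩
  rw [FU, dif_pos hne]
  unfold isoVal
  apply Finset.sup'_congr _ rfl
  intro a _
  unfold inn
  apply Finset.inf'_congr _ rfl
  intro b _
  unfold avg blk
  simp [Finset.sum_const, nsmul_eq_mul]


section Key
variable {s y : Fin n → ℝ} {M : ℝ} {a0 b0 : Fin n}

/-- If all right-extended blocks from `a0` have average at least `M`, and the block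
`[a0,b0]` has average exactly `M`, then any sub-block `[a,b0]` has average at most `M`
(in sum form). -/
lemma key1 (hab : s a0 ≤ s b0)
    (hMle : ∀ b, s a0 ≤ s b → M * ((blk s a0 b).card : ℝ) ≤ ∑ i ∈ blk s a0 b, y i)
    (heq : ∑ i ∈ blk s a0 b0, y i = M * ((blk s a0 b0).card : ℝ))
    {a : Fin n} (ha1 : s a0 ≤ s a) (ha2 : s a ≤ s b0) :
    ∑ i ∈ blk s a b0, y i ≤ M * ((blk s a b0).card : ℝ) := by
  have hsub : blk s a b0 ⊆ blk s a0 b0 := fun i hi => by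
    rcases mem_blk.1 hi with ⟨h1, h2⟩
    exact mem_blk.2 ⟨ha1.trans h1, h2⟩
  set D := blk s a0 b0 \ blk s a b0 with hD
  have hsum : ∑ i ∈ D, y i + ∑ i ∈ blk s a b0, y i = ∑ i ∈ blk s a0 b0, y i :=
    Finset.sum_sdiff hsub
  have hcard : (D.card : ℝ) + ((blk s a b0).card : ℝ) = ((blk s a0 b0).card : ℝ) := by
    have := Finset.card_sdiff_add_card_eq_card hsub
    exact_mod_cast congrArg (Nat.cast (R := ℝ)) this
  rcases D.eq_empty_or_nonempty with hDe | hDne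
  · have h1 : ∑ i ∈ D, y i = 0 := by rw [hDe]; simp
    have h2 : (D.card : ℝ) = 0 := by rw [hDe]; simp
    have h3 : M * (D.card : ℝ) = 0 := by rw [h2]; ring
    have hm : M * ((blk s a0 b0).card : ℝ)
        = M * (D.card : ℝ) + M * ((blk s a b0).card : ℝ) := by rw [← hcard]; ring
    linarith
  · obtain ⟨b'', hb''D, hb''max⟩ := D.exists_max_image s hDne
    have hb''mem := hb''D
    rw [hD, Finset.mem_sdiff, mem_blk, mem_blk] at hb''mem
    obtain ⟨⟨hb1, hb2⟩, hb3⟩ := hb''mem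
    have hb''lt : ¬ s a ≤ s b'' := fun h => hb3 ⟨h, hb2⟩
    have hDeq : D = blk s a0 b'' := by
      ext i
      rw [hD, Finset.mem_sdiff, mem_blk, mem_blk, mem_blk]
      constructor
      · rintro ⟨⟨h1, h2⟩, h3⟩
        exact ⟨h1, hb''max i (by rw [hD, Finset.mem_sdiff, mem_blk, mem_blk]; exact ⟨⟨h1,h2⟩,h3⟩)⟩
      · rintro ⟨h1, h2⟩
        refine ⟨⟨h1, h2.trans hb2⟩, fun hc => ?_⟩
        exact absurd hc.1 (not_le.2 (lt_of_le_of_lt h2 (lt_of_not_ge hb''lt)))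
    have hDsum : M * ((D.card : ℝ)) ≤ ∑ i ∈ D, y i := by
      rw [hDeq]; exact hMle b'' hb1
    have hm : M * ((blk s a0 b0).card : ℝ)
        = M * (D.card : ℝ) + M * ((blk s a b0).card : ℝ) := by rw [← hcard]; ring
    linarith
end Key

lemma sum_FU_zero (s y : Fin n → ℝ) (φ : ℝ → ℝ) :
    ∀ (N : ℕ) (U : Finset (Fin n)), U.card ≤ N →
      (∀ i ∈ U, ∀ j, s i ≤ s j → j ∈ U) →
      ∑ j ∈ U, (y j - FU s y U j) * φ (FU s y U j) = 0 := by
  intro N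
  induction N with
  | zero => intro U hc _; rw [Finset.card_eq_zero.1 (Nat.le_zero.1 hc)]; simp
  | succ N ih =>
    intro U hc hupper
    rcases U.eq_empty_or_nonempty with rfl | hne
    · simp
    obtain ⟨a0, ha0U, ha0min⟩ := U.exists_min_image s hne
    have uEq : ∀ i, i ∈ U ↔ s a0 ≤ s i := fun i =>
      ⟨fun h => ha0min i h, fun h => hupper a0 ha0U i h⟩
    have hinne : (Finset.univ.filter (fun b => s a0 ≤ s b)).Nonempty := ⟨a0, by simp⟩
    set M := inn s y a0 a0 with hMdef
    obtain ⟨b0, hb0mem, hb0eq⟩ := Finset.exists_mem_eq_inf' hinne (fun b => avg s y a0 b)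
    have hb0 : s a0 ≤ s b0 := by simpa using (Finset.mem_filter.1 hb0mem).2
    have hMle : ∀ b, s a0 ≤ s b → M ≤ avg s y a0 b := by
      intro b hb
      rw [hMdef, inn]
      exact Finset.inf'_le _ (by simp [hb])
    have hMleS : ∀ b, s a0 ≤ s b →
        M * ((blk s a0 b).card : ℝ) ≤ ∑ i ∈ blk s a0 b, y i := by
      intro b hb
      have := hMle b hb
      rw [avg, le_div_iff₀ (blk_card_pos hb)] at this
      exact this
    have heqS : ∑ i ∈ blk s a0 b0, y i = M * ((blk s a0 b0).card : ℝ) := by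
      have : M = avg s y a0 b0 := by rw [hMdef, inn]; exact hb0eq
      rw [avg, eq_div_iff (ne_of_gt (blk_card_pos hb0))] at this
      linarith [this]
    set B := blk s a0 b0 with hBdef
    set U' := Finset.univ.filter (fun i => ¬ s i ≤ s b0) with hU'def
    have memU' : ∀ i, i ∈ U' ↔ s b0 < s i := by
      intro i; rw [hU'def]; simp [not_le]
    have hU'subU : U' ⊆ U := by
      intro i hi
      exact (uEq i).2 (hb0.trans ((memU' i).1 hi).le)
    have hU'upper : ∀ i ∈ U', ∀ j, s i ≤ s j → j ∈ U' := by
      intro i hi j hij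
      exact (memU' j).2 (lt_of_lt_of_le ((memU' i).1 hi) hij)
    have hb0U : b0 ∈ U := (uEq b0).2 hb0
    have hb0nU' : b0 ∉ U' := by rw [memU' b0]; simp
    have hcard' : U'.card ≤ N := by
      have : U' ⊂ U := (Finset.ssubset_iff_of_subset hU'subU).2 ⟨b0, hb0U, hb0nU'⟩
      have := Finset.card_lt_card this
      omega
    -- first block has constant fitted value M
    have f1 : ∀ j ∈ B, FU s y U j = M := by
      intro j hj
      obtain ⟨hj1, hj2⟩ := mem_blk.1 hj
      have hAne : (U.filter (fun a => s a ≤ s j)).Nonempty :=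
        ⟨a0, Finset.mem_filter.2 ⟨ha0U, hj1⟩⟩
      rw [FU, dif_pos hAne]
      apply le_antisymm
      · apply Finset.sup'_le
        intro a haA
        obtain ⟨haU, haj⟩ := Finset.mem_filter.1 haA
        have ha0a : s a0 ≤ s a := (uEq a).1 haU
        have hab0 : s a ≤ s b0 := haj.trans hj2
        have h1 : inn s y j a ≤ avg s y a b0 :=
          Finset.inf'_le _ (by simp [hj2])
        have h2 : avg s y a b0 ≤ M := by
          rw [avg, div_le_iff₀ (blk_card_pos hab0)]
          exact key1 hb0 hMleS heqS ha0a hab0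
        exact h1.trans h2
      · refine le_trans ?_ (Finset.le_sup' (inn s y j)
          (Finset.mem_filter.2 ⟨ha0U, hj1⟩))
        apply Finset.le_inf'
        intro b hb
        have hjb : s j ≤ s b := by simpa using (Finset.mem_filter.1 hb).2
        exact hMle b (hj1.trans hjb)
    -- the rest has the same fitted values as the subproblem
    have f2 : ∀ j ∈ U', FU s y U j = FU s y U' j := by
      intro j hjU'
      have hjlt : s b0 < s j := (memU' j).1 hjU'
      have hjU : j ∈ U := hU'subU hjU'
      have hA'ne : (U'.filter (fun a => s a ≤ s j)).Nonempty :=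
        ⟨j, Finset.mem_filter.2 ⟨hjU', le_rfl⟩⟩
      have hAne : (U.filter (fun a => s a ≤ s j)).Nonempty :=
        ⟨j, Finset.mem_filter.2 ⟨hjU, le_rfl⟩⟩
      rw [FU, FU, dif_pos hAne, dif_pos hA'ne]
      have hU'ne : U'.Nonempty := ⟨j, hjU'⟩
      obtain ⟨a', ha'U', ha'min⟩ := U'.exists_min_image s hU'ne
      have ha'b0 : s b0 < s a' := (memU' a').1 ha'U'
      have ha'A' : a' ∈ U'.filter (fun a => s a ≤ s j) :=
        Finset.mem_filter.2 ⟨ha'U', ha'min j hjU'⟩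
      apply le_antisymm
      · apply Finset.sup'_le
        intro a haA
        obtain ⟨haU, haj⟩ := Finset.mem_filter.1 haA
        by_cases hcase : s a ≤ s b0
        · refine le_trans ?_ (Finset.le_sup' _ ha'A')
          apply Finset.le_inf'
          intro b hb
          have hjb : s j ≤ s b := by simpa using (Finset.mem_filter.1 hb).2
          have h1 : inn s y j a ≤ avg s y a b := Finset.inf'_le _ hb
          refine h1.trans ?_
          -- pointwise claim: avg a b ≤ avg a' b
          have ha0a : s a0 ≤ s a := (uEq a).1 haU
          have hb0b : s b0 < s b := lt_of_lt_of_le hjlt hjb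
          have hbU' : b ∈ U' := (memU' b).2 hb0b
          have ha'b : s a' ≤ s b := ha'min b hbU'
          have hsplit : blk s a b = blk s a b0 ∪ blk s a' b := by
            ext i
            rw [Finset.mem_union, mem_blk, mem_blk, mem_blk]
            constructor
            · rintro ⟨h1', h2'⟩
              by_cases hib0 : s i ≤ s b0
              · exact Or.inl ⟨h1', hib0⟩
              · exact Or.inr ⟨ha'min i ((memU' i).2 (not_le.1 hib0)), h2'⟩
            · rintro (⟨h1', h2'⟩ | ⟨h1', h2'⟩)
              · exact ⟨h1', h2'.trans hb0b.le⟩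
              · exact ⟨(hcase.trans ha'b0.le).trans h1', h2'⟩
          have hdisj : Disjoint (blk s a b0) (blk s a' b) := by
            rw [Finset.disjoint_left]
            intro i hiP hiQ
            have h2' := (mem_blk.1 hiP).2
            have h1' := (mem_blk.1 hiQ).1
            exact absurd h2' (not_le.2 (lt_of_lt_of_le ha'b0 h1'))
          have hP : ∑ i ∈ blk s a b0, y i ≤ M * ((blk s a b0).card : ℝ) :=
            key1 hb0 hMleS heqS ha0a hcase
          have hQ : M * ((blk s a' b).card : ℝ) ≤ ∑ i ∈ blk s a' b, y i := by
            have hQeq : blk s a' b = blk s a0 b \ blk s a0 b0 := by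
              ext i
              rw [Finset.mem_sdiff, mem_blk, mem_blk, mem_blk]
              constructor
              · rintro ⟨h1', h2'⟩
                refine ⟨⟨(hb0.trans ha'b0.le).trans h1', h2'⟩, fun hc' => ?_⟩
                exact absurd hc'.2 (not_le.2 (lt_of_lt_of_le ha'b0 h1'))
              · rintro ⟨⟨h1', h2'⟩, h3'⟩
                have hib0 : ¬ s i ≤ s b0 := fun hle => h3' ⟨h1', hle⟩
                exact ⟨ha'min i ((memU' i).2 (not_le.1 hib0)), h2'⟩
            have hsub2 : blk s a0 b0 ⊆ blk s a0 b := by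
              intro i hi
              rcases mem_blk.1 hi with ⟨h1', h2'⟩
              exact mem_blk.2 ⟨h1', h2'.trans hb0b.le⟩
            have hsum2 : ∑ i ∈ blk s a0 b \ blk s a0 b0, y i + ∑ i ∈ blk s a0 b0, y i
                = ∑ i ∈ blk s a0 b, y i := Finset.sum_sdiff hsub2
            have hcard2 : ((blk s a0 b \ blk s a0 b0).card : ℝ) + ((blk s a0 b0).card : ℝ)
                = ((blk s a0 b).card : ℝ) := by
              have := Finset.card_sdiff_add_card_eq_card hsub2
              exact_mod_cast congrArg (Nat.cast (R := ℝ)) this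
            have hbig : M * ((blk s a0 b).card : ℝ) ≤ ∑ i ∈ blk s a0 b, y i :=
              hMleS b (hb0.trans (hb0b.le))
            have hm : M * ((blk s a0 b).card : ℝ)
                = M * (((blk s a0 b \ blk s a0 b0).card : ℝ)) + M * ((blk s a0 b0).card : ℝ) := by
              rw [← hcard2]; ring
            rw [hQeq]
            linarith [hsum2, heqS, hbig, hm]
          have hp0 : 0 < ((blk s a b0).card : ℝ) := blk_card_pos hcase
          have hq0 : 0 < ((blk s a' b).card : ℝ) := blk_card_pos ha'b
          rw [avg, avg, hsplit, Finset.sum_union hdisj, Finset.card_union_of_disjoint hdisj]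
          push_cast
          rw [div_le_div_iff₀ (by linarith) hq0]
          nlinarith [hP, hQ, hp0, hq0]
        · have haU'' : a ∈ U' := (memU' a).2 (not_le.1 hcase)
          exact Finset.le_sup' _ (Finset.mem_filter.2 ⟨haU'', haj⟩)
      · apply Finset.sup'_le
        intro a haA'
        obtain ⟨haU', haj⟩ := Finset.mem_filter.1 haA'
        exact Finset.le_sup' _ (Finset.mem_filter.2 ⟨hU'subU haU', haj⟩)
    -- split the sum
    have h1 : U.filter (fun i => s i ≤ s b0) = B := by
      ext i
      rw [Finset.mem_filter, hBdef, mem_blk, uEq i]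
    have h2 : U.filter (fun i => ¬ s i ≤ s b0) = U' := by
      ext i
      rw [Finset.mem_filter, memU' i, not_le]
      exact ⟨fun h => h.2, fun h => ⟨hU'subU ((memU' i).2 h), h⟩⟩
    rw [← Finset.sum_filter_add_sum_filter_not U (fun i => s i ≤ s b0), h1, h2]
    have hBsum : ∑ j ∈ B, (y j - FU s y U j) * φ (FU s y U j) = 0 := by
      rw [Finset.sum_congr rfl (fun j hj => by rw [f1 j hj]), ← Finset.sum_mul]
      have : ∑ j ∈ B, (y j - M) = 0 := by
        rw [Finset.sum_sub_distrib, Finset.sum_const, nsmul_eq_mul]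
        rw [hBdef] at heqS ⊢
        linarith [heqS]
      rw [this, zero_mul]
    have hU'sum : ∑ j ∈ U', (y j - FU s y U j) * φ (FU s y U j) = 0 := by
      rw [Finset.sum_congr rfl (fun j hj => by rw [f2 j hj])]
      exact ih U' hcard' hU'upper
    rw [hBsum, hU'sum, add_zero]

theorem isoKey (s y : Fin n → ℝ) (φ : ℝ → ℝ) :
    ∑ j, (y j - isoVal s (fun _ => 1) y j) * φ (isoVal s (fun _ => 1) y j) = 0 := by
  have h := sum_FU_zero s y φ (Finset.univ.card) Finset.univ le_rfl
    (fun i _ j _ => Finset.mem_univ j)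
  calc ∑ j, (y j - isoVal s (fun _ => 1) y j) * φ (isoVal s (fun _ => 1) y j)
      = ∑ j, (y j - FU s y Finset.univ j) * φ (FU s y Finset.univ j) := by
        apply Finset.sum_congr rfl
        intro j _
        rw [isoVal_eq_FU]
    _ = 0 := h

/-! ### Bounds -/

lemma avg_bounds {s y : Fin n → ℝ} (hy : ∀ i, 0 ≤ y i ∧ y i ≤ 1) {a b : Fin n}
    (hab : s a ≤ s b) : 0 ≤ avg s y a b ∧ avg s y a b ≤ 1 := by
  have hpos := blk_card_pos (s := s) hab
  constructor
  · exact div_nonneg (Finset.sum_nonneg fun i _ => (hy i).1) hpos.le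
  · rw [avg, div_le_one hpos]
    calc ∑ i ∈ blk s a b, y i ≤ ∑ _i ∈ blk s a b, (1 : ℝ) :=
          Finset.sum_le_sum fun i _ => (hy i).2
      _ = ((blk s a b).card : ℝ) := by simp

lemma isoVal_bounds (s y : Fin n → ℝ) (hy : ∀ i, 0 ≤ y i ∧ y i ≤ 1) (j : Fin n) :
    0 ≤ isoVal s (fun _ => 1) y j ∧ isoVal s (fun _ => 1) y j ≤ 1 := by
  rw [isoVal_eq_FU]
  have hne : ((Finset.univ : Finset (Fin n)).filter (fun a => s a ≤ s j)).Nonempty :=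
    ⟨j, by simp⟩
  rw [FU, dif_pos hne]
  constructor
  · refine le_trans ?_ (Finset.le_sup' (inn s y j) (by simp : j ∈ _))
    apply Finset.le_inf'
    intro b hb
    have hjb : s j ≤ s b := by simpa using (Finset.mem_filter.1 hb).2
    exact (avg_bounds hy hjb).1
  · apply Finset.sup'_le
    intro a ha
    have haj : s a ≤ s j := by simpa using (Finset.mem_filter.1 ha).2
    refine le_trans (Finset.inf'_le _ (by simp : j ∈ _)) ?_
    exact (avg_bounds hy haj).2

/-! ### Permutation equivariance -/

lemma filter_perm_image (σ : Equiv.Perm (Fin n)) (p : Fin n → Prop) [DecidablePred p] :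
    (Finset.univ.filter (fun a => p (σ a))).image σ = Finset.univ.filter p := by
  ext x
  simp only [Finset.mem_image, Finset.mem_filter, Finset.mem_univ, true_and]
  exact ⟨fun ⟨a, hp, ha⟩ => ha ▸ hp, fun hp => ⟨σ.symm x, by simpa using hp, by simp⟩⟩

lemma sum_perm (σ : Equiv.Perm (Fin n)) (p : Fin n → Prop) [DecidablePred p]
    (f : Fin n → ℝ) :
    ∑ i ∈ Finset.univ.filter (fun i => p (σ i)), f (σ i)
      = ∑ i ∈ Finset.univ.filter p, f i := by
  rw [← filter_perm_image σ p, Finset.sum_image (fun a _ b _ h => σ.injective h)]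

lemma sup'_perm (σ : Equiv.Perm (Fin n)) (p : Fin n → Prop) [DecidablePred p]
    (f : Fin n → ℝ) (h1 : (Finset.univ.filter (fun i => p (σ i))).Nonempty)
    (h2 : (Finset.univ.filter p).Nonempty) :
    (Finset.univ.filter (fun i => p (σ i))).sup' h1 (fun i => f (σ i))
      = (Finset.univ.filter p).sup' h2 f := by
  have himg : (Finset.univ.filter p) = (Finset.univ.filter (fun i => p (σ i))).image σ :=
    (filter_perm_image σ p).symm
  rw [Finset.sup'_congr h2 himg (fun a _ => rfl),
    Finset.sup'_image (himg ▸ h2) f]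
  rfl

lemma inf'_perm (σ : Equiv.Perm (Fin n)) (p : Fin n → Prop) [DecidablePred p]
    (f : Fin n → ℝ) (h1 : (Finset.univ.filter (fun i => p (σ i))).Nonempty)
    (h2 : (Finset.univ.filter p).Nonempty) :
    (Finset.univ.filter (fun i => p (σ i))).inf' h1 (fun i => f (σ i))
      = (Finset.univ.filter p).inf' h2 f := by
  have himg : (Finset.univ.filter p) = (Finset.univ.filter (fun i => p (σ i))).image σ :=
    (filter_perm_image σ p).symm
  rw [Finset.inf'_congr h2 himg (fun a _ => rfl),
    Finset.inf'_image (himg ▸ h2) f]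
  rfl

lemma isoVal_perm (s w y : Fin n → ℝ) (σ : Equiv.Perm (Fin n)) (j : Fin n) :
    isoVal (s ∘ σ) (w ∘ σ) (y ∘ σ) j = isoVal s w y (σ j) := by
  unfold isoVal
  rw [← sup'_perm σ (fun a => s a ≤ s (σ j))
    (fun a => (Finset.univ.filter (fun b => s (σ j) ≤ s b)).inf' ⟨σ j, by simp⟩
      (fun b => (∑ i ∈ Finset.univ.filter (fun i => s a ≤ s i ∧ s i ≤ s b), w i * y i) /
        (∑ i ∈ Finset.univ.filter (fun i => s a ≤ s i ∧ s i ≤ s b), w i)))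
    ⟨j, by simp⟩ ⟨σ j, by simp⟩]
  apply Finset.sup'_congr _ rfl
  intro a _
  rw [← inf'_perm σ (fun b => s (σ j) ≤ s b)
    (fun b => (∑ i ∈ Finset.univ.filter (fun i => s (σ a) ≤ s i ∧ s i ≤ s b), w i * y i) /
      (∑ i ∈ Finset.univ.filter (fun i => s (σ a) ≤ s i ∧ s i ≤ s b), w i))
    ⟨j, by simp⟩ ⟨σ j, by simp⟩]
  apply Finset.inf'_congr _ rfl
  intro b _
  simp only [Function.comp]
  rw [← sum_perm σ (fun i => s (σ a) ≤ s i ∧ s i ≤ s (σ b)) (fun i => w i * y i),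
    ← sum_perm σ (fun i => s (σ a) ≤ s i ∧ s i ≤ s (σ b)) w]

/-! ### Measurability -/

lemma measurable_finset_sup' {α ι : Type*} [MeasurableSpace α] (t : Finset ι)
    (ht : t.Nonempty) (f : ι → α → ℝ) (hf : ∀ i, Measurable (f i)) :
    Measurable fun x => t.sup' ht fun i => f i x := by
  induction ht using Finset.Nonempty.cons_induction with
  | singleton a => simp only [Finset.sup'_singleton]; exact hf a
  | cons a t hat ht ih =>
    have he : ∀ x, ((Finset.cons a t hat).sup' (Finset.cons_nonempty hat) fun i => f i x)
        = f a x ⊔ t.sup' ht fun i => f i x := fun x => Finset.sup'_cons ht (fun i => f i x)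
    simp only [he]
    exact (hf a).sup ih

lemma measurable_finset_inf' {α ι : Type*} [MeasurableSpace α] (t : Finset ι)
    (ht : t.Nonempty) (f : ι → α → ℝ) (hf : ∀ i, Measurable (f i)) :
    Measurable fun x => t.inf' ht fun i => f i x := by
  induction ht using Finset.Nonempty.cons_induction with
  | singleton a => simp only [Finset.inf'_singleton]; exact hf a
  | cons a t hat ht ih =>
    have he : ∀ x, ((Finset.cons a t hat).inf' (Finset.cons_nonempty hat) fun i => f i x)
        = f a x ⊓ t.inf' ht fun i => f i x := fun x => Finset.inf'_cons ht (fun i => f i x)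
    simp only [he]
    exact (hf a).inf ih

lemma sup'_filter_ite (p : Fin n → Prop) [DecidablePred p] (f : Fin n → ℝ) (j : Fin n)
    (hpj : p j) :
    (Finset.univ.filter p).sup' ⟨j, by simp [hpj]⟩ f
      = Finset.univ.sup' ⟨j, Finset.mem_univ j⟩ (fun a => if p a then f a else f j) := by
  apply le_antisymm
  · apply Finset.sup'_le
    intro a ha
    have hp := (Finset.mem_filter.1 ha).2
    have he : (if p a then f a else f j) = f a := if_pos hp
    rw [← he]
    exact Finset.le_sup' (fun a => if p a then f a else f j) (Finset.mem_univ a)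
  · apply Finset.sup'_le
    intro a _
    by_cases hp : p a
    · rw [if_pos hp]
      exact Finset.le_sup' f (Finset.mem_filter.2 ⟨Finset.mem_univ a, hp⟩)
    · rw [if_neg hp]
      exact Finset.le_sup' f (Finset.mem_filter.2 ⟨Finset.mem_univ j, hpj⟩)

lemma inf'_filter_ite (p : Fin n → Prop) [DecidablePred p] (f : Fin n → ℝ) (j : Fin n)
    (hpj : p j) :
    (Finset.univ.filter p).inf' ⟨j, by simp [hpj]⟩ f
      = Finset.univ.inf' ⟨j, Finset.mem_univ j⟩ (fun a => if p a then f a else f j) := by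
  apply le_antisymm
  · apply Finset.le_inf'
    intro a _
    by_cases hp : p a
    · rw [if_pos hp]
      exact Finset.inf'_le f (Finset.mem_filter.2 ⟨Finset.mem_univ a, hp⟩)
    · rw [if_neg hp]
      exact Finset.inf'_le f (Finset.mem_filter.2 ⟨Finset.mem_univ j, hpj⟩)
  · apply Finset.le_inf'
    intro a ha
    have hp := (Finset.mem_filter.1 ha).2
    have he : (if p a then f a else f j) = f a := if_pos hp
    rw [← he]
    exact Finset.inf'_le (fun a => if p a then f a else f j) (Finset.mem_univ a)

lemma measurable_isoVal {α : Type*} [MeasurableSpace α] (S Yv : α → Fin n → ℝ)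
    (hS : ∀ i, Measurable (fun x => S x i)) (hY : ∀ i, Measurable (fun x => Yv x i))
    (j : Fin n) :
    Measurable fun x => isoVal (S x) (fun _ => 1) (Yv x) j := by
  classical
  set q : α → Fin n → Fin n → ℝ := fun x a b =>
    (∑ i, if S x a ≤ S x i ∧ S x i ≤ S x b then Yv x i else 0) /
    (∑ i, if S x a ≤ S x i ∧ S x i ≤ S x b then (1 : ℝ) else 0) with hq
  have hqmeas : ∀ a b, Measurable fun x => q x a b := by
    intro a b
    apply Measurable.div
    · apply Finset.measurable_sum
      intro i _
      exact Measurable.ite ((measurableSet_le (hS a) (hS i)).inter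
        (measurableSet_le (hS i) (hS b))) (hY i) measurable_const
    · apply Finset.measurable_sum
      intro i _
      exact Measurable.ite ((measurableSet_le (hS a) (hS i)).inter
        (measurableSet_le (hS i) (hS b))) measurable_const measurable_const
  set inn2 : α → Fin n → ℝ := fun x a =>
    Finset.univ.inf' ⟨j, Finset.mem_univ j⟩
      (fun b => if S x j ≤ S x b then q x a b else q x a j) with hinn2
  have hinn2meas : ∀ a, Measurable fun x => inn2 x a := by
    intro a
    apply measurable_finset_inf'
    intro b
    exact Measurable.ite (measurableSet_le (hS j) (hS b)) (hqmeas a b) (hqmeas a j)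
  have hAvg : ∀ x (a b : Fin n),
      (∑ i ∈ Finset.univ.filter (fun i => S x a ≤ S x i ∧ S x i ≤ S x b),
          (fun _ : Fin n => (1 : ℝ)) i * Yv x i) /
        (∑ i ∈ Finset.univ.filter (fun i => S x a ≤ S x i ∧ S x i ≤ S x b),
          (fun _ : Fin n => (1 : ℝ)) i) = q x a b := by
    intro x a b
    rw [hq]
    simp [Finset.sum_filter]
  have hform : ∀ x, isoVal (S x) (fun _ => 1) (Yv x) j
      = Finset.univ.sup' ⟨j, Finset.mem_univ j⟩
          (fun a => if S x a ≤ S x j then inn2 x a else inn2 x j) := by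
    intro x
    have e1 : ∀ a : Fin n,
        (Finset.univ.filter (fun b => S x j ≤ S x b)).inf' ⟨j, by simp⟩
          (fun b =>
            (∑ i ∈ Finset.univ.filter (fun i => S x a ≤ S x i ∧ S x i ≤ S x b),
                (fun _ : Fin n => (1 : ℝ)) i * Yv x i) /
              (∑ i ∈ Finset.univ.filter (fun i => S x a ≤ S x i ∧ S x i ≤ S x b),
                (fun _ : Fin n => (1 : ℝ)) i)) = inn2 x a := by
      intro a
      have e2 : (Finset.univ.filter (fun b => S x j ≤ S x b)).inf' ⟨j, by simp⟩
          (fun b =>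
            (∑ i ∈ Finset.univ.filter (fun i => S x a ≤ S x i ∧ S x i ≤ S x b),
                (fun _ : Fin n => (1 : ℝ)) i * Yv x i) /
              (∑ i ∈ Finset.univ.filter (fun i => S x a ≤ S x i ∧ S x i ≤ S x b),
                (fun _ : Fin n => (1 : ℝ)) i))
          = (Finset.univ.filter (fun b => S x j ≤ S x b)).inf' ⟨j, by simp⟩
            (fun b => q x a b) := by
        apply Finset.inf'_congr _ rfl
        intro b _
        exact hAvg x a b
      rw [e2, hinn2]
      exact inf'_filter_ite (fun b => S x j ≤ S x b) (fun b => q x a b) j le_rfl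
    unfold isoVal
    have e3 : (Finset.univ.filter (fun a => S x a ≤ S x j)).sup' ⟨j, by simp⟩
        (fun a =>
          (Finset.univ.filter (fun b => S x j ≤ S x b)).inf' ⟨j, by simp⟩
            (fun b =>
              (∑ i ∈ Finset.univ.filter (fun i => S x a ≤ S x i ∧ S x i ≤ S x b),
                  (fun _ : Fin n => (1 : ℝ)) i * Yv x i) /
                (∑ i ∈ Finset.univ.filter (fun i => S x a ≤ S x i ∧ S x i ≤ S x b),
                  (fun _ : Fin n => (1 : ℝ)) i)))
        = (Finset.univ.filter (fun a => S x a ≤ S x j)).sup' ⟨j, by simp⟩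
            (fun a => inn2 x a) := by
      apply Finset.sup'_congr _ rfl
      intro a _
      exact e1 a
    rw [e3]
    exact sup'_filter_ite (fun a => S x a ≤ S x j) (fun a => inn2 x a) j le_rfl
  simp only [hform]
  apply measurable_finset_sup'
  intro a
  exact Measurable.ite (measurableSet_le (hS a) (hS j)) (hinn2meas a) (hinn2meas j)

end IVAPaux

/-- Validity (perfect calibration) of IVAPs: for i.i.d. observations there is
a selector `S` (indeed `S = Y`) such that `E(Y ∣ P_S) = P_S` a.s., where
`(P₀, P₁)` is the IVAP multiprobability prediction for the test object. -/
theorem stmt_16 {Ω : Type*} [MeasurableSpace Ω] (μ : Measure Ω)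
    [IsProbabilityMeasure μ]
    {𝓧 : Type*} [MeasurableSpace 𝓧]
    (l m k : ℕ) (hl : l = m + k) (hk : 0 < k)
    (Z : Fin (l + 1) → Ω → 𝓧 × ℝ)
    (hmeas : ∀ i, Measurable (Z i))
    (hindep : iIndepFun Z μ)
    (hident : ∀ i j, IdentDistrib (Z i) (Z j) μ μ)
    (hbin : ∀ i ω, (Z i ω).2 = 0 ∨ (Z i ω).2 = 1)
    (A : (Fin m → 𝓧 × ℝ) → 𝓧 → ℝ)
    (hA : Measurable fun p : (Fin m → 𝓧 × ℝ) × 𝓧 => A p.1 p.2)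
    (Y : Ω → ℝ) (hYdef : ∀ ω, Y ω = (Z (Fin.last l) ω).2)
    (P0 P1 : Ω → ℝ)
    (hP0 : ∀ ω, P0 ω = ivapPred A
      (fun i => Z ⟨i, by omega⟩ ω)
      (fun i : Fin k => Z ⟨m + i, by omega⟩ ω)
      (Z (Fin.last l) ω).1 0)
    (hP1 : ∀ ω, P1 ω = ivapPred A
      (fun i => Z ⟨i, by omega⟩ ω)
      (fun i : Fin k => Z ⟨m + i, by omega⟩ ω)
      (Z (Fin.last l) ω).1 1) :
    ∃ S : Ω → ℝ, (∀ ω, S ω = 0 ∨ S ω = 1) ∧ (∀ ω, S ω = Y ω) ∧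
      μ[Y | MeasurableSpace.comap
          (fun ω => if S ω = 1 then P1 ω else P0 ω) Real.measurableSpace]
        =ᵐ[μ] fun ω => if S ω = 1 then P1 ω else P0 ω := by
  subst hl
  classical
  -- index embedding of the calibration + test points
  set e : Fin (k + 1) → Fin (m + k + 1) := fun j => ⟨m + j, by omega⟩ with hedef
  have he_last : e (Fin.last k) = Fin.last (m + k) := rfl
  have he_inj : Function.Injective e := by
    intro a b hab
    have : m + (a : ℕ) = m + (b : ℕ) := congrArg Fin.val hab
    exact Fin.ext (by omega)
  set tr : (Fin (m + k + 1) → 𝓧 × ℝ) → Fin m → 𝓧 × ℝ :=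
    fun z i => z ⟨i, by omega⟩ with htrdef
  set sV : (Fin (m + k + 1) → 𝓧 × ℝ) → Fin (k + 1) → ℝ :=
    fun z j => A (tr z) ((z (e j)).1) with hsVdef
  set yV : (Fin (m + k + 1) → 𝓧 × ℝ) → Fin (k + 1) → ℝ :=
    fun z j => (z (e j)).2 with hyVdef
  set G : (Fin (m + k + 1) → 𝓧 × ℝ) → Fin (k + 1) → ℝ :=
    fun z j => isoVal (sV z) (fun _ => 1) (yV z) j with hGdef
  set vec : Ω → (Fin (m + k + 1) → 𝓧 × ℝ) := fun ω i => Z i ω with hvecdef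
  set g : Ω → ℝ := fun ω => G (vec ω) (Fin.last k) with hgdef
  -- the selected prediction equals the isotonic regression on the true labels
  have hsnoc_s : ∀ ω, (Fin.snoc (fun i : Fin k =>
        A (fun i : Fin m => Z ⟨i, by omega⟩ ω) ((Z ⟨m + i, by omega⟩ ω).1))
        (A (fun i : Fin m => Z ⟨i, by omega⟩ ω) ((Z (Fin.last (m + k)) ω).1))
        : Fin (k+1) → ℝ) = sV (vec ω) := by
    intro ω
    funext j
    refine Fin.lastCases ?_ (fun i => ?_) j
    · rw [Fin.snoc_last]
      rfl
    · rw [Fin.snoc_castSucc]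
      rfl
  have hsnoc_y : ∀ ω, (Fin.snoc (fun i : Fin k => (Z ⟨m + i, by omega⟩ ω).2)
        ((Z (Fin.last (m + k)) ω).2) : Fin (k+1) → ℝ) = yV (vec ω) := by
    intro ω
    funext j
    refine Fin.lastCases ?_ (fun i => ?_) j
    · rw [Fin.snoc_last]
      rfl
    · rw [Fin.snoc_castSucc]
      rfl
  have hg : ∀ ω, (if Y ω = 1 then P1 ω else P0 ω) = g ω := by
    intro ω
    by_cases hY1 : Y ω = 1
    · rw [if_pos hY1, hP1, ivapPred]
      have hy1 : (Z (Fin.last (m + k)) ω).2 = 1 := by rw [← hYdef]; exact hY1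
      show _ = isoVal (sV (vec ω)) (fun _ => 1) (yV (vec ω)) (Fin.last k)
      rw [← hsnoc_s ω, ← hsnoc_y ω, hy1]
    · have hY0 : Y ω = 0 := by
        rcases hbin (Fin.last (m + k)) ω with h0 | h1
        · rw [hYdef]; exact h0
        · exact absurd (by rw [hYdef]; exact h1) hY1
      rw [if_neg hY1, hP0, ivapPred]
      have hy0 : (Z (Fin.last (m + k)) ω).2 = 0 := by rw [← hYdef]; exact hY0
      show _ = isoVal (sV (vec ω)) (fun _ => 1) (yV (vec ω)) (Fin.last k)
      rw [← hsnoc_s ω, ← hsnoc_y ω, hy0]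
  -- measurability
  have hvec : Measurable vec := measurable_pi_lambda _ hmeas
  have htr : Measurable tr := measurable_pi_lambda _ (fun i => measurable_pi_apply _)
  have hsVm : ∀ j, Measurable (fun z => sV z j) := by
    intro j
    exact hA.comp (htr.prodMk ((measurable_pi_apply (e j)).fst))
  have hyVm : ∀ j, Measurable (fun z => yV z j) :=
    fun j => (measurable_pi_apply (e j)).snd
  have hGm : ∀ j, Measurable (fun z => G z j) :=
    fun j => IVAPaux.measurable_isoVal sV yV hsVm hyVm j
  have hg_meas : Measurable g := (hGm (Fin.last k)).comp hvec
  have hY_meas : Measurable Y := by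
    have : Y = fun ω => (Z (Fin.last (m + k)) ω).2 := funext hYdef
    rw [this]
    exact (hmeas _).snd
  -- bounds
  have hyb : ∀ ω (π : Equiv.Perm (Fin (m + k + 1))) (i : Fin (k + 1)),
      0 ≤ yV (vec ω ∘ π) i ∧ yV (vec ω ∘ π) i ≤ 1 := by
    intro ω π i
    rcases hbin (π (e i)) ω with h0 | h1
    · constructor <;> simp [hyVdef, hvecdef, h0]
    · constructor <;> simp [hyVdef, hvecdef, h1]
  have hGb : ∀ ω (π : Equiv.Perm (Fin (m + k + 1))) (j : Fin (k + 1)),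
      0 ≤ G (vec ω ∘ π) j ∧ G (vec ω ∘ π) j ≤ 1 := by
    intro ω π j
    exact IVAPaux.isoVal_bounds _ _ (hyb ω π) j
  -- the joint law is an iid product measure
  set ν : Measure (𝓧 × ℝ) := μ.map (Z (Fin.last (m + k))) with hνdef
  haveI hνprob : IsProbabilityMeasure ν := Measure.isProbabilityMeasure_map (hmeas _).aemeasurable
  set P : Measure (Fin (m + k + 1) → 𝓧 × ℝ) := Measure.pi (fun _ => ν) with hPdef
  have hmargin : ∀ i B, MeasurableSet B → μ (Z i ⁻¹' B) = ν B := by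
    intro i B hB
    rw [hνdef, ← Measure.map_apply (hmeas i) hB, (hident i (Fin.last (m + k))).map_eq]
  have hmap : μ.map vec = P := by
    rw [hPdef]
    refine (Measure.pi_eq ?_).symm
    intro B hB
    rw [Measure.map_apply hvec (MeasurableSet.univ_pi hB)]
    have hpre : vec ⁻¹' Set.pi Set.univ B = ⋂ i, Z i ⁻¹' B i := by
      ext ω
      simp [hvecdef, Set.mem_pi]
    rw [hpre, hindep.meas_iInter (fun i => ⟨B i, hB i, rfl⟩)]
    exact Finset.prod_congr rfl (fun i _ => hmargin i (B i) (hB i))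
  have hmapperm : ∀ π : Equiv.Perm (Fin (m + k + 1)),
      μ.map (fun ω => vec ω ∘ π) = P := by
    intro π
    have hcomp : (fun ω => vec ω ∘ π) = (fun x => x ∘ π) ∘ vec := rfl
    have hmeascomp : Measurable (fun x : Fin (m + k + 1) → 𝓧 × ℝ => x ∘ π) :=
      measurable_pi_lambda _ (fun i => measurable_pi_apply _)
    rw [hcomp, ← Measure.map_map hmeascomp hvec, hmap]
    have hpc : (fun x : Fin (m + k + 1) → 𝓧 × ℝ => x ∘ π)
        = ⇑(MeasurableEquiv.piCongrLeft (fun _ : Fin (m + k + 1) => 𝓧 × ℝ) π.symm) := by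
      funext x
      funext a
      have h1 := MeasurableEquiv.piCongrLeft_apply_apply (β := fun _ : Fin (m + k + 1) => 𝓧 × ℝ) π.symm x (π a)
      simp only [Equiv.symm_apply_apply] at h1
      rw [h1]
      rfl
    rw [hPdef, hpc]
    exact (measurePreserving_piCongrLeft (fun _ => ν) π.symm).map_eq
  -- bounds for g and Y
  have hgb : ∀ ω, 0 ≤ g ω ∧ g ω ≤ 1 := by
    intro ω
    have := hGb ω (Equiv.refl _) (Fin.last k)
    simpa using this
  have hYb : ∀ ω, |Y ω| ≤ 1 := by
    intro ω
    rcases hbin (Fin.last (m + k)) ω with h0 | h1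
    · rw [hYdef, h0]; norm_num
    · rw [hYdef, h1]; norm_num
  -- the key integral identity
  have hint : ∀ φ : ℝ → ℝ, Measurable φ → (∀ r, |φ r| ≤ 1) →
      ∫ ω, (Y ω - g ω) * φ (g ω) ∂μ = 0 := by
    intro φ hφm hφb
    set h : (Fin (m + k + 1) → 𝓧 × ℝ) → ℝ :=
      fun z => (yV z (Fin.last k) - G z (Fin.last k)) * φ (G z (Fin.last k)) with hhdef
    have hhm : Measurable h :=
      ((hyVm _).sub (hGm _)).mul (hφm.comp (hGm _))
    have hπmeas : ∀ π : Equiv.Perm (Fin (m + k + 1)),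
        Measurable (fun ω => vec ω ∘ π) :=
      fun π => measurable_pi_lambda _ (fun i => hmeas _)
    -- composition with the swap permutations
    have hswap : ∀ (j : Fin (k + 1)) (z : Fin (m + k + 1) → 𝓧 × ℝ),
        h (z ∘ Equiv.swap (e j) (e (Fin.last k)))
          = (yV z j - G z j) * φ (G z j) := by
      intro j z
      set π := Equiv.swap (e j) (e (Fin.last k)) with hπ
      set σ := Equiv.swap j (Fin.last k) with hσ
      have htr' : tr (z ∘ π) = tr z := by
        funext i
        have hne1 : (⟨(i : ℕ), by omega⟩ : Fin (m + k + 1)) ≠ e j := by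
          intro hcon
          have hval := congrArg Fin.val hcon
          simp only [hedef] at hval
          have : (i : ℕ) < m := i.2
          omega
        have hne2 : (⟨(i : ℕ), by omega⟩ : Fin (m + k + 1)) ≠ e (Fin.last k) := by
          intro hcon
          have hval := congrArg Fin.val hcon
          simp only [hedef] at hval
          have : (i : ℕ) < m := i.2
          omega
        show z (π _) = _
        rw [hπ, Equiv.swap_apply_of_ne_of_ne hne1 hne2]
      have hπe : ∀ i : Fin (k + 1), π (e i) = e (σ i) := by
        intro i
        rw [hπ, hσ]
        exact he_inj.swap_apply j (Fin.last k) i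
      have hsV' : sV (z ∘ π) = sV z ∘ σ := by
        funext i
        show A (tr (z ∘ π)) ((z (π (e i))).1) = A (tr z) ((z (e (σ i))).1)
        rw [htr', hπe]
      have hyV' : yV (z ∘ π) = yV z ∘ σ := by
        funext i
        show (z (π (e i))).2 = (z (e (σ i))).2
        rw [hπe]
      have hG' : ∀ i, G (z ∘ π) i = G z (σ i) := by
        intro i
        show isoVal (sV (z ∘ π)) (fun _ => 1) (yV (z ∘ π)) i
          = isoVal (sV z) (fun _ => 1) (yV z) (σ i)
        rw [hsV', hyV']
        exact IVAPaux.isoVal_perm (sV z) (fun _ => 1) (yV z) σ i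
      show (yV (z ∘ π) (Fin.last k) - G (z ∘ π) (Fin.last k))
          * φ (G (z ∘ π) (Fin.last k)) = _
      rw [hG', hyV']
      have hσlast : σ (Fin.last k) = j := by rw [hσ]; exact Equiv.swap_apply_right _ _
      show (yV z (σ (Fin.last k)) - G z (σ (Fin.last k)))
          * φ (G z (σ (Fin.last k))) = _
      rw [hσlast]
    -- integrability of all swapped integrands
    have hintegrable : ∀ j : Fin (k + 1),
        Integrable (fun ω => h (vec ω ∘ Equiv.swap (e j) (e (Fin.last k)))) μ := by
      intro j
      have hm2 : Measurable (fun ω => h (vec ω ∘ Equiv.swap (e j) (e (Fin.last k)))) :=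
        hhm.comp (hπmeas _)
      refine ⟨hm2.aestronglyMeasurable, ?_⟩
      apply HasFiniteIntegral.of_bounded (C := 2)
      apply Filter.Eventually.of_forall
      intro ω
      rw [hswap]
      have h1 := hyb ω (Equiv.refl _) j
      simp only [Equiv.coe_refl, Function.comp_id] at h1
      have h2 := hGb ω (Equiv.refl _) j
      simp only [Equiv.coe_refl, Function.comp_id] at h2
      have h3 := hφb (G (vec ω) j)
      have habs : |yV (vec ω) j - G (vec ω) j| ≤ 2 := by
        rw [abs_le]
        constructor <;> [linarith [h1.1, h1.2, h2.1, h2.2]; linarith [h1.1, h1.2, h2.1, h2.2]]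
      calc ‖(yV (vec ω) j - G (vec ω) j) * φ (G (vec ω) j)‖
          = |yV (vec ω) j - G (vec ω) j| * |φ (G (vec ω) j)| := abs_mul _ _
        _ ≤ 2 * 1 := mul_le_mul habs h3 (abs_nonneg _) (by norm_num)
        _ = 2 := by norm_num
    -- each swapped integrand has integral `∫ h dP`
    have hsame : ∀ j : Fin (k + 1),
        ∫ ω, h (vec ω ∘ Equiv.swap (e j) (e (Fin.last k))) ∂μ = ∫ z, h z ∂P := by
      intro j
      rw [← hmapperm (Equiv.swap (e j) (e (Fin.last k))),
        integral_map (hπmeas _).aemeasurable hhm.aestronglyMeasurable]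
    -- the sum over swaps vanishes pointwise
    have hsum0 : ∑ j : Fin (k + 1),
        ∫ ω, h (vec ω ∘ Equiv.swap (e j) (e (Fin.last k))) ∂μ = 0 := by
      rw [← integral_finset_sum _ (fun j _ => hintegrable j)]
      have hptw : ∀ ω, ∑ j : Fin (k + 1),
          h (vec ω ∘ Equiv.swap (e j) (e (Fin.last k))) = 0 := by
        intro ω
        calc ∑ j : Fin (k + 1), h (vec ω ∘ Equiv.swap (e j) (e (Fin.last k)))
            = ∑ j : Fin (k + 1), (yV (vec ω) j - G (vec ω) j) * φ (G (vec ω) j) :=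
              Finset.sum_congr rfl (fun j _ => hswap j (vec ω))
          _ = 0 := IVAPaux.isoKey (sV (vec ω)) (yV (vec ω)) φ
      simp only [hptw, integral_zero]
    have hPint : ∫ z, h z ∂P = 0 := by
      have hs : ∑ j : Fin (k + 1),
          ∫ ω, h (vec ω ∘ Equiv.swap (e j) (e (Fin.last k))) ∂μ
          = (k + 1 : ℝ) * ∫ z, h z ∂P := by
        rw [Finset.sum_congr rfl (fun j _ => hsame j), Finset.sum_const]
        simp [nsmul_eq_mul]
      rw [hs] at hsum0
      have : (k + 1 : ℝ) ≠ 0 := by positivity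
      exact (mul_eq_zero.1 hsum0).resolve_left this
    have hfinal : ∫ ω, (Y ω - g ω) * φ (g ω) ∂μ = ∫ z, h z ∂P := by
      rw [← hmap, integral_map hvec.aemeasurable hhm.aestronglyMeasurable]
      apply integral_congr_ae
      apply Filter.Eventually.of_forall
      intro ω
      show (Y ω - g ω) * φ (g ω)
        = (yV (vec ω) (Fin.last k) - G (vec ω) (Fin.last k)) * φ (G (vec ω) (Fin.last k))
      have hYv : yV (vec ω) (Fin.last k) = Y ω := by
        rw [hYdef]
        rfl
      rw [hYv]
    rw [hfinal, hPint]
  -- conclude via the characterisation of conditional expectation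
  refine ⟨Y, fun ω => by rw [hYdef]; exact hbin _ ω, fun ω => rfl, ?_⟩
  have hfun : (fun ω => if Y ω = 1 then P1 ω else P0 ω) = g := funext hg
  rw [hfun]
  have hm : MeasurableSpace.comap g Real.measurableSpace ≤ _ := hg_meas.comap_le
  haveI : IsFiniteMeasure (μ.trim hm) := by infer_instance
  haveI : SigmaFinite (μ.trim hm) := by infer_instance
  have hYint : Integrable Y μ :=
    ⟨hY_meas.aestronglyMeasurable, HasFiniteIntegral.of_bounded (C := 1)
      (Filter.Eventually.of_forall fun ω => hYb ω)⟩
  have hgabs : ∀ ω, |g ω| ≤ 1 := by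
    intro ω
    rw [abs_le]
    exact ⟨by linarith [(hgb ω).1], (hgb ω).2⟩
  have hgint : Integrable g μ :=
    ⟨hg_meas.aestronglyMeasurable, HasFiniteIntegral.of_bounded (C := 1)
      (Filter.Eventually.of_forall fun ω => hgabs ω)⟩
  refine (ae_eq_condExp_of_forall_setIntegral_eq hm hYint
    (fun s _ _ => hgint.integrableOn) ?_ ?_).symm
  · -- the set-integral identity
    rintro s ⟨B, hB, rfl⟩ _
    set φ : ℝ → ℝ := Set.indicator B (fun _ => 1) with hφdef
    have hφm : Measurable φ := measurable_const.indicator hB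
    have hφb : ∀ r, |φ r| ≤ 1 := by
      intro r
      rw [hφdef]
      by_cases hr : r ∈ B <;> simp [Set.indicator_apply, hr]
    have h0 := hint φ hφm hφb
    have hsmeas : MeasurableSet (g ⁻¹' B) := hg_meas hB
    have hYφint : Integrable (fun ω => Y ω * φ (g ω)) μ := by
      refine ⟨(hY_meas.mul (hφm.comp hg_meas)).aestronglyMeasurable,
        HasFiniteIntegral.of_bounded (C := 1) (Filter.Eventually.of_forall fun ω => ?_)⟩
      calc ‖Y ω * φ (g ω)‖ = |Y ω| * |φ (g ω)| := abs_mul _ _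
        _ ≤ 1 * 1 := mul_le_mul (hYb ω) (hφb _) (abs_nonneg _) (by norm_num)
        _ = 1 := by norm_num
    have hgφint : Integrable (fun ω => g ω * φ (g ω)) μ := by
      refine ⟨(hg_meas.mul (hφm.comp hg_meas)).aestronglyMeasurable,
        HasFiniteIntegral.of_bounded (C := 1) (Filter.Eventually.of_forall fun ω => ?_)⟩
      calc ‖g ω * φ (g ω)‖ = |g ω| * |φ (g ω)| := abs_mul _ _
        _ ≤ 1 * 1 := mul_le_mul (hgabs ω) (hφb _) (abs_nonneg _) (by norm_num)
        _ = 1 := by norm_num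
    have hsub : ∫ ω, (Y ω - g ω) * φ (g ω) ∂μ
        = ∫ ω, Y ω * φ (g ω) ∂μ - ∫ ω, g ω * φ (g ω) ∂μ := by
      rw [← integral_sub hYφint hgφint]
      apply integral_congr_ae
      exact Filter.Eventually.of_forall fun ω => by ring
    have heqint : ∫ ω, Y ω * φ (g ω) ∂μ = ∫ ω, g ω * φ (g ω) ∂μ := by
      rw [hsub] at h0
      linarith
    have hYind : ∫ ω in g ⁻¹' B, Y ω ∂μ = ∫ ω, Y ω * φ (g ω) ∂μ := by
      rw [← integral_indicator hsmeas]
      apply integral_congr_ae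
      refine Filter.Eventually.of_forall fun ω => ?_
      by_cases hω : g ω ∈ B
      · simp [Set.indicator_apply, hω, hφdef]
      · simp [Set.indicator_apply, hω, hφdef]
    have hgind : ∫ ω in g ⁻¹' B, g ω ∂μ = ∫ ω, g ω * φ (g ω) ∂μ := by
      rw [← integral_indicator hsmeas]
      apply integral_congr_ae
      refine Filter.Eventually.of_forall fun ω => ?_
      by_cases hω : g ω ∈ B
      · simp [Set.indicator_apply, hω, hφdef]
      · simp [Set.indicator_apply, hω, hφdef]
    rw [hYind, hgind, heqint]
  · -- comap-measurability of g
    have hmg : Measurable[MeasurableSpace.comap g Real.measurableSpace] g :=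
      fun t ht => ⟨t, ht, rfl⟩
    exact ⟨g, hmg.stronglyMeasurable, Filter.EventuallyEq.rfl⟩
end

section
/- For an IVAP, the multiprobability outputs always satisfy p_0 < p_1: fitting isotonic regression after appending (s,1) yields a strictly larger fitted value at s than after appending (s,0). -/
/-- IVAP outputs satisfy `p₀ < p₁`: fitting isotonic regression after
appending the test point `(s, 1)` yields a strictly larger fitted value at
the test point than after appending `(s, 0)`. -/
theorem stmt_17 (k : ℕ) (hk : 0 < k) (s y : Fin (k + 1) → ℝ)
    (hy : ∀ i, i ≠ Fin.last k → y i ∈ ({0, 1} : Set ℝ)) :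
    isoVal s (fun _ => 1) (Function.update y (Fin.last k) 0) (Fin.last k) <
    isoVal s (fun _ => 1) (Function.update y (Fin.last k) 1) (Fin.last k) := by
  classical
  set j := Fin.last k with hj
  -- key: for any admissible interval, the average with y j = 1 is strictly
  -- larger than with y j = 0
  have key : ∀ a b : Fin (k+1), s a ≤ s j → s j ≤ s b →
      (∑ i ∈ Finset.univ.filter (fun i => s a ≤ s i ∧ s i ≤ s b),
          (1:ℝ) * Function.update y j 0 i) /
        (∑ i ∈ Finset.univ.filter (fun i => s a ≤ s i ∧ s i ≤ s b), (1:ℝ)) <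
      (∑ i ∈ Finset.univ.filter (fun i => s a ≤ s i ∧ s i ≤ s b),
          (1:ℝ) * Function.update y j 1 i) /
        (∑ i ∈ Finset.univ.filter (fun i => s a ≤ s i ∧ s i ≤ s b), (1:ℝ)) := by
    intro a b ha hb
    set T := Finset.univ.filter (fun i => s a ≤ s i ∧ s i ≤ s b) with hT
    have hjT : j ∈ T := by simp [hT, ha, hb]
    have hden : (0:ℝ) < ∑ i ∈ T, (1:ℝ) := by
      rw [Finset.sum_const, nsmul_eq_mul, mul_one]
      exact_mod_cast Finset.card_pos.mpr ⟨j, hjT⟩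
    have hnum : ∑ i ∈ T, (1:ℝ) * Function.update y j 1 i
        = (∑ i ∈ T, (1:ℝ) * Function.update y j 0 i) + 1 := by
      rw [← Finset.add_sum_erase _ _ hjT, ← Finset.add_sum_erase _ _ hjT]
      have hs : ∑ i ∈ T.erase j, (1:ℝ) * Function.update y j 1 i
          = ∑ i ∈ T.erase j, (1:ℝ) * Function.update y j 0 i := by
        refine Finset.sum_congr rfl fun i hi => ?_
        have hij : i ≠ j := Finset.ne_of_mem_erase hi
        simp [Function.update_of_ne hij]
      rw [hs]
      simp [Function.update_self]
      ring
    rw [div_lt_div_iff₀ hden hden, hnum]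
    nlinarith
  unfold isoVal
  set A := Finset.univ.filter (fun a => s a ≤ s j) with hA
  set B := Finset.univ.filter (fun b => s j ≤ s b) with hB
  have hAne : A.Nonempty := ⟨j, by simp [hA]⟩
  have hBne : B.Nonempty := ⟨j, by simp [hB]⟩
  obtain ⟨a, haA, hEq⟩ := Finset.exists_mem_eq_sup' hAne
    (fun a => B.inf' hBne (fun b =>
      (∑ i ∈ Finset.univ.filter (fun i => s a ≤ s i ∧ s i ≤ s b),
          (1:ℝ) * Function.update y j 0 i) /
        (∑ i ∈ Finset.univ.filter (fun i => s a ≤ s i ∧ s i ≤ s b), (1:ℝ))))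
  rw [hEq]
  have ha : s a ≤ s j := (Finset.mem_filter.mp haA).2
  refine lt_of_lt_of_le ?_ (Finset.le_sup' _ haA)
  -- now compare the two inf's at this a
  obtain ⟨b, hbB, hEq'⟩ := Finset.exists_mem_eq_inf' hBne
    (fun b =>
      (∑ i ∈ Finset.univ.filter (fun i => s a ≤ s i ∧ s i ≤ s b),
          (1:ℝ) * Function.update y j 1 i) /
        (∑ i ∈ Finset.univ.filter (fun i => s a ≤ s i ∧ s i ≤ s b), (1:ℝ)))
  rw [hEq']
  have hb : s j ≤ s b := (Finset.mem_filter.mp hbB).2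
  exact lt_of_le_of_lt (Finset.inf'_le _ hbB) (key a b ha hb)
end

section
/- The isotonic regression values satisfy the symmetry F^0_i(s'_1,...,s'_{k'}, w_1,...,w_{k'}, y'_1,...,y'_{k'}) = 1 - F^1_i(-s'_1,...,-s'_{k'}, w_1,...,w_{k'}, 1-y'_1,...,1-y'_{k'}), where F^1_i is the isotonic fit at s'_i after appending a test point with label 1 just to the left of s'_i, and F^0_i is the isotonic fit at s'_i after appending a test point with label 0 just to the right of s'_i. -/
namespace IsoAux

noncomputable def avg {n : ℕ} (s w y : Fin n → ℝ) (a b : Fin n) : ℝ :=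
  (∑ i ∈ Finset.univ.filter (fun i => s a ≤ s i ∧ s i ≤ s b), w i * y i) /
  (∑ i ∈ Finset.univ.filter (fun i => s a ≤ s i ∧ s i ≤ s b), w i)

lemma isoVal_eq {n : ℕ} (s w y : Fin n → ℝ) (j : Fin n) :
    isoVal s w y j =
      (Finset.univ.filter (fun a => s a ≤ s j)).sup' ⟨j, by simp⟩
        (fun a => (Finset.univ.filter (fun b => s j ≤ s b)).inf' ⟨j, by simp⟩
          (fun b => avg s w y a b)) := rfl

variable {n : ℕ} (s w y : Fin n → ℝ)

lemma W_pos (hw : ∀ i, 0 < w i) {a b j : Fin n} (ha : s a ≤ s j) (hb : s j ≤ s b) :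
    0 < ∑ i ∈ Finset.univ.filter (fun i => s a ≤ s i ∧ s i ≤ s b), w i :=
  Finset.sum_pos (fun i _ => hw i) ⟨j, by simp [ha, hb]⟩

lemma sum_split (f : Fin n → ℝ) {a b b' j : Fin n} (ha : s a ≤ s j) (hb : s j ≤ s b)
    (hbb : s b ≤ s b') :
    ∑ i ∈ Finset.univ.filter (fun i => s a ≤ s i ∧ s i ≤ s b'), f i =
      (∑ i ∈ Finset.univ.filter (fun i => s a ≤ s i ∧ s i ≤ s b), f i) +
      ∑ i ∈ Finset.univ.filter (fun i => s b < s i ∧ s i ≤ s b'), f i := by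
  rw [← Finset.sum_union]
  · congr 1
    ext i
    simp only [Finset.mem_union, Finset.mem_filter, Finset.mem_univ, true_and]
    constructor
    · rintro ⟨h1, h2⟩
      by_cases h : s i ≤ s b
      · exact Or.inl ⟨h1, h⟩
      · exact Or.inr ⟨lt_of_not_ge h, h2⟩
    · rintro (⟨h1, h2⟩ | ⟨h1, h2⟩)
      · exact ⟨h1, h2.trans hbb⟩
      · exact ⟨ha.trans (hb.trans h1.le), h2⟩
  · rw [Finset.disjoint_left]
    intro i hi hi'
    simp only [Finset.mem_filter, Finset.mem_univ, true_and] at hi hi'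
    linarith [hi.2, hi'.1]

lemma mediant_le {S1 W1 Se We S2 W2 M : ℝ} (hW1 : 0 < W1) (hW2 : 0 < W2) (hWe : 0 ≤ We)
    (h1 : (S1 + Se) / (W1 + We) = M) (h2 : M ≤ S1 / W1) (h3 : S2 / W2 ≤ M) :
    (S2 + Se) / (W2 + We) ≤ M := by
  rw [div_le_iff₀ (by linarith)]
  have e1 : S1 + Se = M * (W1 + We) := by
    field_simp at h1; linarith
  have e2 : M * W1 ≤ S1 := (le_div_iff₀ hW1).mp h2
  have e3 : S2 ≤ M * W2 := (div_le_iff₀ hW2).mp h3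
  nlinarith

lemma mediant_le' {S1 W1 Se We S2 W2 M : ℝ} (hW1 : 0 < W1) (hW2 : 0 < W2) (hWe : 0 ≤ We)
    (h1 : S1 / W1 = M) (h2 : M ≤ (S1 + Se) / (W1 + We)) (h3 : (S2 + Se) / (W2 + We) ≤ M) :
    S2 / W2 ≤ M := by
  rw [div_le_iff₀ hW2]
  have e1 : S1 = M * W1 := by field_simp at h1; linarith
  have e2 : M * (W1 + We) ≤ S1 + Se := (le_div_iff₀ (by linarith)).mp h2
  have e3 : S2 + Se ≤ M * (W2 + We) := (div_le_iff₀ (by linarith)).mp h3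
  nlinarith

lemma minimax (hw : ∀ i, 0 < w i) (j : Fin n) :
    (Finset.univ.filter (fun a => s a ≤ s j)).sup' ⟨j, by simp⟩
      (fun a => (Finset.univ.filter (fun b => s j ≤ s b)).inf' ⟨j, by simp⟩
        (fun b => avg s w y a b)) =
    (Finset.univ.filter (fun b => s j ≤ s b)).inf' ⟨j, by simp⟩
      (fun b => (Finset.univ.filter (fun a => s a ≤ s j)).sup' ⟨j, by simp⟩
        (fun a => avg s w y a b)) := by
  set A := Finset.univ.filter (fun a => s a ≤ s j) with hAdef
  set B := Finset.univ.filter (fun b => s j ≤ s b) with hBdef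
  have hA : A.Nonempty := ⟨j, by simp [hAdef]⟩
  have hB : B.Nonempty := ⟨j, by simp [hBdef]⟩
  have memA : ∀ {a}, a ∈ A → s a ≤ s j := by intro a ha; simpa [hAdef] using ha
  have memB : ∀ {b}, b ∈ B → s j ≤ s b := by intro b hb; simpa [hBdef] using hb
  apply le_antisymm
  · apply Finset.le_inf'
    intro b hb
    apply Finset.sup'_le
    intro a ha
    exact le_trans (Finset.inf'_le _ hb) (Finset.le_sup' (fun a => avg s w y a b) ha)
  · obtain ⟨astar, hastar, hMa⟩ := Finset.exists_mem_eq_sup' hA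
      (fun a => B.inf' hB (fun b => avg s w y a b))
    set M := A.sup' hA (fun a => B.inf' hB (fun b => avg s w y a b)) with hMdef
    obtain ⟨bstar, hbstar, hMb⟩ := Finset.exists_mem_eq_inf' hB (fun b => avg s w y astar b)
    have hMeq : avg s w y astar bstar = M := by rw [← hMb, ← hMa]
    refine le_trans (Finset.inf'_le _ hbstar) ?_
    apply Finset.sup'_le
    intro a ha
    -- know: inf'_B (avg a ·) ≤ M
    obtain ⟨b', hb', hb'eq⟩ := Finset.exists_mem_eq_inf' hB (fun b => avg s w y a b)
    have hab' : avg s w y a b' ≤ M := by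
      rw [← hb'eq, hMdef]
      exact Finset.le_sup' (fun a => B.inf' hB (fun b => avg s w y a b)) ha
    have hastarb' : M ≤ avg s w y astar b' := by
      rw [hMa]; exact Finset.inf'_le _ hb'
    have hsa := memA ha
    have hsastar := memA hastar
    have hsb' := memB hb'
    have hsbstar := memB hbstar
    rcases le_total (s b') (s bstar) with hcase | hcase
    · -- E = (b', bstar]
      have split1 := sum_split s (fun i => w i * y i) hsastar hsb' hcase
      have split2 := sum_split s w hsastar hsb' hcase
      have split3 := sum_split s (fun i => w i * y i) hsa hsb' hcase
      have split4 := sum_split s w hsa hsb' hcase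
      have hW1 := W_pos s w hw hsastar hsb'
      have hW2 := W_pos s w hw hsa hsb'
      have hWe : 0 ≤ ∑ i ∈ Finset.univ.filter (fun i => s b' < s i ∧ s i ≤ s bstar), w i :=
        Finset.sum_nonneg (fun i _ => (hw i).le)
      have := mediant_le hW1 hW2 hWe
        (by unfold avg at hMeq; rw [split1, split2] at hMeq; exact hMeq) hastarb' hab'
      unfold avg
      rw [split3, split4]
      exact this
    · -- E = (bstar, b']
      have split1 := sum_split s (fun i => w i * y i) hsastar hsbstar hcase
      have split2 := sum_split s w hsastar hsbstar hcase
      have split3 := sum_split s (fun i => w i * y i) hsa hsbstar hcase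
      have split4 := sum_split s w hsa hsbstar hcase
      have hW1 := W_pos s w hw hsastar hsbstar
      have hW2 := W_pos s w hw hsa hsbstar
      have hWe : 0 ≤ ∑ i ∈ Finset.univ.filter (fun i => s bstar < s i ∧ s i ≤ s b'), w i :=
        Finset.sum_nonneg (fun i _ => (hw i).le)
      unfold avg at hab' hastarb' hMeq ⊢
      rw [split3, split4] at hab'
      rw [split1, split2] at hastarb'
      exact mediant_le' hW1 hW2 hWe hMeq hastarb' hab'


lemma sup'_one_sub {α : Type*} (t : Finset α) (h : t.Nonempty) (f : α → ℝ) :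
    t.sup' h (fun x => 1 - f x) = 1 - t.inf' h f := by
  apply le_antisymm
  · apply Finset.sup'_le
    intro x hx
    have := Finset.inf'_le f hx
    linarith
  · obtain ⟨x, hx, hxe⟩ := Finset.exists_mem_eq_inf' h f
    rw [hxe]
    exact Finset.le_sup' (fun x => 1 - f x) hx

lemma inf'_one_sub {α : Type*} (t : Finset α) (h : t.Nonempty) (f : α → ℝ) :
    t.inf' h (fun x => 1 - f x) = 1 - t.sup' h f := by
  apply le_antisymm
  · obtain ⟨x, hx, hxe⟩ := Finset.exists_mem_eq_sup' h f
    rw [hxe]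
    exact Finset.inf'_le (fun x => 1 - f x) hx
  · apply Finset.le_inf'
    intro x hx
    have := Finset.le_sup' f hx
    linarith

lemma avg_neg (hw : ∀ i, 0 < w i) {p q j : Fin n} (hp : s j ≤ s p) (hq : s q ≤ s j) :
    avg (fun i => -(s i)) w (fun i => 1 - y i) p q = 1 - avg s w y q p := by
  have hset : (Finset.univ.filter (fun i => -(s p) ≤ -(s i) ∧ -(s i) ≤ -(s q)))
      = Finset.univ.filter (fun i => s q ≤ s i ∧ s i ≤ s p) := by
    ext i
    simp only [Finset.mem_filter, Finset.mem_univ, true_and, neg_le_neg_iff]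
    tauto
  have hW := W_pos s w hw hq hp
  unfold avg
  rw [hset]
  have hsum : ∑ i ∈ Finset.univ.filter (fun i => s q ≤ s i ∧ s i ≤ s p), w i * (1 - y i)
      = (∑ i ∈ Finset.univ.filter (fun i => s q ≤ s i ∧ s i ≤ s p), w i)
        - ∑ i ∈ Finset.univ.filter (fun i => s q ≤ s i ∧ s i ≤ s p), w i * y i := by
    rw [← Finset.sum_sub_distrib]
    congr 1
    ext i
    ring
  rw [hsum, sub_div, div_self (ne_of_gt hW)]

lemma isoVal_neg (hw : ∀ i, 0 < w i) (j : Fin n) :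
    isoVal (fun i => -(s i)) w (fun i => 1 - y i) j = 1 - isoVal s w y j := by
  rw [isoVal_eq, isoVal_eq]
  have hset1 : (Finset.univ.filter (fun a => -(s a) ≤ -(s j)))
      = Finset.univ.filter (fun b => s j ≤ s b) := by
    ext i; simp
  have hset2 : (Finset.univ.filter (fun b => -(s j) ≤ -(s b)))
      = Finset.univ.filter (fun a => s a ≤ s j) := by
    ext i; simp
  have hB : (Finset.univ.filter (fun b => s j ≤ s b)).Nonempty := ⟨j, by simp⟩
  have hA : (Finset.univ.filter (fun a => s a ≤ s j)).Nonempty := ⟨j, by simp⟩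
  refine (Finset.sup'_congr _ hset1 (fun p hp => rfl)).trans ?_
  have step : ∀ p ∈ Finset.univ.filter (fun b => s j ≤ s b),
      (Finset.univ.filter (fun b => -(s j) ≤ -(s b))).inf' (hset2 ▸ ⟨j, by simp⟩)
        (fun q => avg (fun i => -(s i)) w (fun i => 1 - y i) p q)
      = 1 - (Finset.univ.filter (fun a => s a ≤ s j)).sup' hA
        (fun q => avg s w y q p) := by
    intro p hp
    have hp' : s j ≤ s p := by simpa using hp
    rw [Finset.inf'_congr _ hset2 (fun q hq => avg_neg s w y hw hp'
      (by have : q ∈ Finset.univ.filter (fun a => s a ≤ s j) := hset2 ▸ hq; simpa using this))]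
    exact inf'_one_sub _ _ _
  rw [Finset.sup'_congr _ rfl step, sup'_one_sub, minimax s w y hw j]

end IsoAux


/-- Symmetry of the isotonic fits `F⁰` and `F¹`: appending a unit-weight test
point with label 0 just to the right of `s'ᵢ` gives the same fitted value at
the test point as `1` minus the fit obtained from the order-reversed
(negated) scores with flipped labels `y ↦ 1 - y` and the test point (now just
to the left of `-s'ᵢ`) labelled 1. -/
theorem stmt_19 (k' : ℕ) (hk : 0 < k') (s' : Fin k' → ℝ) (hs' : StrictMono s')
    (w : Fin k' → ℝ) (hw : ∀ j, 0 < w j)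
    (y' : Fin k' → ℝ) (hy' : ∀ j, y' j ∈ Set.Icc (0:ℝ) 1)
    (i : Fin k') (t : ℝ) (ht1 : s' i < t) (ht2 : ∀ j, s' i < s' j → t < s' j) :
    isoVal (Fin.snoc s' t) (Fin.snoc w 1) (Fin.snoc y' 0) (Fin.last k') =
      1 - isoVal (Fin.snoc (fun j => -(s' j)) (-t)) (Fin.snoc w 1)
            (Fin.snoc (fun j => 1 - y' j) 1) (Fin.last k') := by
  have h1 : (Fin.snoc (fun j => -(s' j)) (-t) : Fin (k'+1) → ℝ)
      = fun i => -((Fin.snoc s' t : Fin (k'+1) → ℝ) i) := by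
    funext i
    refine Fin.lastCases ?_ (fun i => ?_) i <;> simp
  have h2 : (Fin.snoc (fun j => 1 - y' j) 1 : Fin (k'+1) → ℝ)
      = fun i => 1 - ((Fin.snoc y' 0 : Fin (k'+1) → ℝ) i) := by
    funext i
    refine Fin.lastCases ?_ (fun i => ?_) i <;> simp
  have hw' : ∀ i, 0 < (Fin.snoc w 1 : Fin (k'+1) → ℝ) i := by
    intro i
    refine Fin.lastCases ?_ (fun i => ?_) i <;> simp [hw]
  rw [h2, h1,
    IsoAux.isoVal_neg (Fin.snoc s' t) (Fin.snoc w 1) (Fin.snoc y' 0) hw' (Fin.last k')]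
  ring
end
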